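/- arXiv:2605.16421 — 6 statements merged into one kernel-verified Lean document; each statement's English description precedes it below -/
import Mathlib

section
/- Completeness of the orthologic proof system: if for every ortholattice L and every valuation v : X → L one has v(φ) ≤ v(ψ), then the sequent (φ^L, ψ^R) is provable in the orthologic proof system (without non-logical axioms). -/
/-- Propositional formulas over a set `X` of variables. -/
inductive Formula (X : Type) : Type
  | var : X → Formula X
  | bot : Formula X
  | top : Formula X
  | and : Formula X → Formula X → Formula X
  | or : Formula X → Formula X → Formula X
  | not : Formula X → Formula X

/-- An ortholattice: a bounded lattice with a complement operation. -/
class Ortholattice (L : Type) extends Lattice L, BoundedOrder L where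
  compl : L → L
  compl_compl : ∀ x : L, compl (compl x) = x
  compl_sup : ∀ x y : L, compl (x ⊔ y) = compl x ⊓ compl y
  compl_inf : ∀ x y : L, compl (x ⊓ y) = compl x ⊔ compl y
  inf_compl : ∀ x : L, x ⊓ compl x = ⊥
  sup_compl : ∀ x : L, x ⊔ compl x = ⊤

/-- Homomorphic extension of a valuation `v : X → L` to formulas. -/
def Formula.eval {X L : Type} [Ortholattice L] (v : X → L) : Formula X → L
  | .var x => v x
  | .bot => ⊥
  | .top => ⊤
  | .and φ ψ => φ.eval v ⊓ ψ.eval v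
  | .or φ ψ => φ.eval v ⊔ ψ.eval v
  | .not φ => Ortholattice.compl (φ.eval v)

/-- Annotated formulas: a formula marked as left (`L`) or right (`R`). -/
inductive Ann (X : Type) : Type
  | L : Formula X → Ann X
  | R : Formula X → Ann X

/-- The underlying formula of an annotated formula. -/
def Ann.fml {X : Type} : Ann X → Formula X
  | .L φ => φ
  | .R φ => φ

/-- An orthologic sequent: an unordered pair of annotated formulas. -/
abbrev Sequent (X : Type) := Sym2 (Ann X)

/-- The orthologic proof system, with non-logical axioms `A`. -/
inductive OLProof {X : Type} (A : Set (Sequent X)) : Sequent X → Prop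
  | ax {t : Sequent X} : t ∈ A → OLProof A t
  | hyp (φ : Formula X) : OLProof A s(Ann.L φ, Ann.R φ)
  | cut (Γ Δ : Ann X) (φ : Formula X) :
      OLProof A s(Γ, Ann.R φ) → OLProof A s(Ann.L φ, Δ) → OLProof A s(Γ, Δ)
  | replace (Γ Δ : Ann X) : OLProof A s(Γ, Γ) → OLProof A s(Γ, Δ)
  | andL₁ (φ ψ : Formula X) (Δ : Ann X) :
      OLProof A s(Ann.L φ, Δ) → OLProof A s(Ann.L (φ.and ψ), Δ)
  | andL₂ (φ ψ : Formula X) (Δ : Ann X) :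
      OLProof A s(Ann.L ψ, Δ) → OLProof A s(Ann.L (φ.and ψ), Δ)
  | andR (Γ : Ann X) (φ ψ : Formula X) :
      OLProof A s(Γ, Ann.R φ) → OLProof A s(Γ, Ann.R ψ) → OLProof A s(Γ, Ann.R (φ.and ψ))
  | orL (φ ψ : Formula X) (Δ : Ann X) :
      OLProof A s(Ann.L φ, Δ) → OLProof A s(Ann.L ψ, Δ) → OLProof A s(Ann.L (φ.or ψ), Δ)
  | orR₁ (Γ : Ann X) (φ ψ : Formula X) :
      OLProof A s(Γ, Ann.R φ) → OLProof A s(Γ, Ann.R (φ.or ψ))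
  | orR₂ (Γ : Ann X) (φ ψ : Formula X) :
      OLProof A s(Γ, Ann.R ψ) → OLProof A s(Γ, Ann.R (φ.or ψ))
  | negL (Γ : Ann X) (φ : Formula X) :
      OLProof A s(Γ, Ann.R φ) → OLProof A s(Γ, Ann.L φ.not)
  | negR (φ : Formula X) (Δ : Ann X) :
      OLProof A s(Ann.L φ, Δ) → OLProof A s(Ann.R φ.not, Δ)
  | botL (Δ : Ann X) : OLProof A s(Ann.L Formula.bot, Δ)
  | topR (Γ : Ann X) : OLProof A s(Γ, Ann.R Formula.top)

/-- Satisfaction of an (ordered) pair of annotated formulas by a valuation. -/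
def AnnSat {X L : Type} [Ortholattice L] (v : X → L) : Ann X → Ann X → Prop
  | .L φ, .R ψ => φ.eval v ≤ ψ.eval v
  | .R φ, .L ψ => ψ.eval v ≤ φ.eval v
  | .L φ, .L ψ => φ.eval v ⊓ ψ.eval v = ⊥
  | .R φ, .R ψ => φ.eval v ⊔ ψ.eval v = ⊤

/-- A valuation satisfies a sequent. -/
def SeqSat {X L : Type} [Ortholattice L] (v : X → L) (t : Sequent X) : Prop :=
  ∀ a b : Ann X, t = s(a, b) → AnnSat v a b
/-- Boolean (classical) evaluation of a formula. -/
def Formula.evalB {X : Type} (v : X → Bool) : Formula X → Bool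
  | .var x => v x
  | .bot => false
  | .top => true
  | .and φ ψ => φ.evalB v && ψ.evalB v
  | .or φ ψ => φ.evalB v || ψ.evalB v
  | .not φ => !(φ.evalB v)

/-- Size of a formula (number of nodes). -/
def Formula.size {X : Type} : Formula X → Nat
  | .var _ => 1
  | .bot => 1
  | .top => 1
  | .and φ ψ => φ.size + ψ.size + 1
  | .or φ ψ => φ.size + ψ.size + 1
  | .not φ => φ.size + 1

/-- Negation normal form. -/
def Formula.nnf {X : Type} : Formula X → Formula X
  | .var x => .var x
  | .bot => .bot
  | .top => .top
  | .and φ ψ => .and φ.nnf ψ.nnf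
  | .or φ ψ => .or φ.nnf ψ.nnf
  | .not (.var x) => .not (.var x)
  | .not .bot => .top
  | .not .top => .bot
  | .not (.and φ ψ) => .or φ.not.nnf ψ.not.nnf
  | .not (.or φ ψ) => .and φ.not.nnf ψ.not.nnf
  | .not (.not φ) => φ.nnf
termination_by φ => φ.size
decreasing_by all_goals (simp [Formula.size] <;> omega)

/-- A formula is in NNF if negation occurs only directly on variables. -/
def Formula.IsNNF {X : Type} : Formula X → Prop
  | .var _ => True
  | .bot => True
  | .top => True
  | .and φ ψ => φ.IsNNF ∧ ψ.IsNNF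
  | .or φ ψ => φ.IsNNF ∧ ψ.IsNNF
  | .not (.var _) => True
  | .not _ => False

/-- `getInverse φ = nnf (¬ φ)`. -/
def getInverse {X : Type} (φ : Formula X) : Formula X := φ.not.nnf

/-- Orthologic equivalence of formulas (without non-logical axioms). -/
def OLEquiv {X : Type} (φ ψ : Formula X) : Prop :=
  OLProof (∅ : Set (Sequent X)) s(Ann.L φ, Ann.R ψ) ∧
  OLProof (∅ : Set (Sequent X)) s(Ann.L ψ, Ann.R φ)

/-- `Subformula γ φ` means `γ` is a subformula of `φ`. -/
inductive Subformula {X : Type} : Formula X → Formula X → Prop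
  | refl (φ : Formula X) : Subformula φ φ
  | and_left {γ φ ψ : Formula X} : Subformula γ φ → Subformula γ (φ.and ψ)
  | and_right {γ φ ψ : Formula X} : Subformula γ ψ → Subformula γ (φ.and ψ)
  | or_left {γ φ ψ : Formula X} : Subformula γ φ → Subformula γ (φ.or ψ)
  | or_right {γ φ ψ : Formula X} : Subformula γ ψ → Subformula γ (φ.or ψ)
  | not_sub {γ φ : Formula X} : Subformula γ φ → Subformula γ φ.not

namespace OLComp

variable {X : Type}

abbrev Pf (t : Sequent X) : Prop := OLProof (∅ : Set (Sequent X)) t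

lemma swap {a b : Ann X} (h : Pf s(a, b)) : Pf s(b, a) := by
  rwa [Sym2.eq_swap]

/-- provability order -/
def pr (φ ψ : Formula X) : Prop := Pf s(Ann.L φ, Ann.R ψ)

lemma pr_refl (φ : Formula X) : pr φ φ := OLProof.hyp φ

lemma pr_trans {φ ψ χ : Formula X} (h1 : pr φ ψ) (h2 : pr ψ χ) : pr φ χ :=
  OLProof.cut _ _ ψ h1 h2

lemma pr_andL₁ (φ ψ : Formula X) : pr (φ.and ψ) φ :=
  OLProof.andL₁ _ _ _ (OLProof.hyp φ)

lemma pr_andL₂ (φ ψ : Formula X) : pr (φ.and ψ) ψ :=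
  OLProof.andL₂ _ _ _ (OLProof.hyp ψ)

lemma pr_andR {χ φ ψ : Formula X} (h1 : pr χ φ) (h2 : pr χ ψ) : pr χ (φ.and ψ) :=
  OLProof.andR _ _ _ h1 h2

lemma pr_orR₁ (φ ψ : Formula X) : pr φ (φ.or ψ) :=
  OLProof.orR₁ _ _ _ (OLProof.hyp φ)

lemma pr_orR₂ (φ ψ : Formula X) : pr ψ (φ.or ψ) :=
  OLProof.orR₂ _ _ _ (OLProof.hyp ψ)

lemma pr_orL {φ ψ χ : Formula X} (h1 : pr φ χ) (h2 : pr ψ χ) : pr (φ.or ψ) χ :=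
  OLProof.orL _ _ _ h1 h2

lemma pr_bot (φ : Formula X) : pr Formula.bot φ := OLProof.botL _

lemma pr_top (φ : Formula X) : pr φ Formula.top := OLProof.topR _

lemma pr_neg {φ ψ : Formula X} (h : pr φ ψ) : pr ψ.not φ.not :=
  swap (OLProof.negR _ _ (OLProof.negL _ _ h))

lemma selfL (φ : Formula X) : Pf s(Ann.L φ, Ann.L φ.not) :=
  OLProof.negL _ _ (OLProof.hyp φ)

lemma selfR (φ : Formula X) : Pf s(Ann.R φ, Ann.R φ.not) :=
  swap (OLProof.negR _ _ (OLProof.hyp φ))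

lemma pr_notnot₁ (φ : Formula X) : pr φ.not.not φ :=
  swap (OLProof.negL _ _ (selfR φ))

lemma pr_notnot₂ (φ : Formula X) : pr φ (φ.not.not) :=
  swap (OLProof.negR _ _ (swap (selfL φ)))

lemma pr_dm_sup₁ (φ ψ : Formula X) : pr (φ.or ψ).not (φ.not.and ψ.not) :=
  pr_andR (pr_neg (pr_orR₁ φ ψ)) (pr_neg (pr_orR₂ φ ψ))

lemma pr_dm_sup₂ (φ ψ : Formula X) : pr (φ.not.and ψ.not) (φ.or ψ).not := by
  have h1 : Pf s(Ann.L φ, Ann.L (φ.not.and ψ.not)) :=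
    swap (OLProof.andL₁ _ _ _ (swap (selfL φ)))
  have h2 : Pf s(Ann.L ψ, Ann.L (φ.not.and ψ.not)) :=
    swap (OLProof.andL₂ _ _ _ (swap (selfL ψ)))
  exact swap (OLProof.negR _ _ (OLProof.orL _ _ _ h1 h2))

lemma pr_dm_inf₁ (φ ψ : Formula X) : pr (φ.and ψ).not (φ.not.or ψ.not) := by
  have h1 : Pf s(Ann.R (φ.not.or ψ.not), Ann.R φ) :=
    swap (OLProof.orR₁ _ _ _ (selfR φ))
  have h2 : Pf s(Ann.R (φ.not.or ψ.not), Ann.R ψ) :=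
    swap (OLProof.orR₂ _ _ _ (selfR ψ))
  exact swap (OLProof.negL _ _ (OLProof.andR _ _ _ h1 h2))

lemma pr_dm_inf₂ (φ ψ : Formula X) : pr (φ.not.or ψ.not) (φ.and ψ).not :=
  pr_orL (pr_neg (pr_andL₁ φ ψ)) (pr_neg (pr_andL₂ φ ψ))

lemma pr_inf_compl (φ : Formula X) : pr (φ.and φ.not) Formula.bot := by
  have h1 : Pf s(Ann.L (φ.and φ.not), Ann.L φ) :=
    OLProof.andL₂ _ _ _ (swap (selfL φ))
  have h2 : Pf s(Ann.L (φ.and φ.not), Ann.L (φ.and φ.not)) :=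
    OLProof.andL₁ _ _ _ (swap h1)
  exact OLProof.replace _ _ h2

lemma pr_sup_compl (φ : Formula X) : pr Formula.top (φ.or φ.not) := by
  have h1 : Pf s(Ann.R (φ.or φ.not), Ann.R φ) :=
    swap (OLProof.orR₂ _ _ _ (selfR φ))
  have h2 : Pf s(Ann.R (φ.or φ.not), Ann.R (φ.or φ.not)) :=
    OLProof.orR₁ _ _ _ h1
  exact swap (OLProof.replace _ _ h2)

/-- provable equivalence -/
instance fsetoid (X : Type) : Setoid (Formula X) where
  r φ ψ := pr φ ψ ∧ pr ψ φ
  iseqv := ⟨fun φ => ⟨pr_refl φ, pr_refl φ⟩, fun h => ⟨h.2, h.1⟩,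
    fun h1 h2 => ⟨pr_trans h1.1 h2.1, pr_trans h2.2 h1.2⟩⟩

/-- Lindenbaum–Tarski algebra -/
def OLA (X : Type) := Quotient (fsetoid X)

def OLA.mk (φ : Formula X) : OLA X := Quotient.mk _ φ

instance : PartialOrder (OLA X) where
  le := Quotient.lift₂ pr (by
    rintro a b a' b' ⟨ha1, ha2⟩ ⟨hb1, hb2⟩
    exact propext ⟨fun h => pr_trans ha2 (pr_trans h hb1),
      fun h => pr_trans ha1 (pr_trans h hb2)⟩)
  le_refl := by rintro ⟨φ⟩; exact pr_refl φ
  le_trans := by rintro ⟨φ⟩ ⟨ψ⟩ ⟨χ⟩ h1 h2; exact pr_trans h1 h2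
  le_antisymm := by rintro ⟨φ⟩ ⟨ψ⟩ h1 h2; exact Quotient.sound ⟨h1, h2⟩

lemma mk_le_mk {φ ψ : Formula X} : OLA.mk φ ≤ OLA.mk ψ ↔ pr φ ψ := Iff.rfl

instance : Lattice (OLA X) where
  inf := Quotient.map₂ Formula.and (by
    rintro a a' ha b b' hb
    exact ⟨pr_andR (pr_trans (pr_andL₁ a b) ha.1) (pr_trans (pr_andL₂ a b) hb.1),
      pr_andR (pr_trans (pr_andL₁ a' b') ha.2) (pr_trans (pr_andL₂ a' b') hb.2)⟩)
  sup := Quotient.map₂ Formula.or (by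
    rintro a a' ha b b' hb
    exact ⟨pr_orL (pr_trans ha.1 (pr_orR₁ a' b')) (pr_trans hb.1 (pr_orR₂ a' b')),
      pr_orL (pr_trans ha.2 (pr_orR₁ a b)) (pr_trans hb.2 (pr_orR₂ a b))⟩)
  inf_le_left := by rintro ⟨φ⟩ ⟨ψ⟩; exact pr_andL₁ φ ψ
  inf_le_right := by rintro ⟨φ⟩ ⟨ψ⟩; exact pr_andL₂ φ ψ
  le_inf := by rintro ⟨φ⟩ ⟨ψ⟩ ⟨χ⟩ h1 h2; exact pr_andR h1 h2
  le_sup_left := by rintro ⟨φ⟩ ⟨ψ⟩; exact pr_orR₁ φ ψ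
  le_sup_right := by rintro ⟨φ⟩ ⟨ψ⟩; exact pr_orR₂ φ ψ
  sup_le := by rintro ⟨φ⟩ ⟨ψ⟩ ⟨χ⟩ h1 h2; exact pr_orL h1 h2

instance : BoundedOrder (OLA X) where
  top := OLA.mk Formula.top
  bot := OLA.mk Formula.bot
  le_top := by rintro ⟨φ⟩; exact pr_top φ
  bot_le := by rintro ⟨φ⟩; exact pr_bot φ

lemma mk_inf (φ ψ : Formula X) : OLA.mk φ ⊓ OLA.mk ψ = OLA.mk (φ.and ψ) := rfl
lemma mk_sup (φ ψ : Formula X) : OLA.mk φ ⊔ OLA.mk ψ = OLA.mk (φ.or ψ) := rfl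
lemma mk_bot : (⊥ : OLA X) = OLA.mk Formula.bot := rfl
lemma mk_top : (⊤ : OLA X) = OLA.mk Formula.top := rfl

instance : Ortholattice (OLA X) where
  compl := Quotient.map Formula.not (fun a b h => ⟨pr_neg h.2, pr_neg h.1⟩)
  compl_compl := by
    rintro ⟨φ⟩; exact Quotient.sound ⟨pr_notnot₁ φ, pr_notnot₂ φ⟩
  compl_sup := by
    rintro ⟨φ⟩ ⟨ψ⟩; exact Quotient.sound ⟨pr_dm_sup₁ φ ψ, pr_dm_sup₂ φ ψ⟩
  compl_inf := by
    rintro ⟨φ⟩ ⟨ψ⟩; exact Quotient.sound ⟨pr_dm_inf₁ φ ψ, pr_dm_inf₂ φ ψ⟩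
  inf_compl := by
    rintro ⟨φ⟩; exact Quotient.sound ⟨pr_inf_compl φ, pr_bot _⟩
  sup_compl := by
    rintro ⟨φ⟩; exact Quotient.sound ⟨pr_top _, pr_sup_compl φ⟩

lemma mk_compl (φ : Formula X) :
    Ortholattice.compl (OLA.mk φ) = OLA.mk φ.not := rfl

lemma eval_mk (φ : Formula X) :
    Formula.eval (fun x => OLA.mk (X := X) (Formula.var x)) φ = OLA.mk φ := by
  induction φ with
  | var x => rfl
  | bot => rfl
  | top => rfl
  | and φ ψ ihφ ihψ => rw [Formula.eval, ihφ, ihψ, mk_inf]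
  | or φ ψ ihφ ihψ => rw [Formula.eval, ihφ, ihψ, mk_sup]
  | not φ ih => rw [Formula.eval, ih, mk_compl]

end OLComp

/-- Completeness of the orthologic proof system: if `v(φ) ≤ v(ψ)`
for every ortholattice `L` and valuation `v : X → L`, then the sequent
`(φ^L, ψ^R)` is provable without non-logical axioms. -/
theorem ol_completeness {X : Type} [Countable X] [Infinite X] (φ ψ : Formula X)
    (h : ∀ (L : Type) [Ortholattice L] (v : X → L), φ.eval v ≤ ψ.eval v) :
    OLProof (∅ : Set (Sequent X)) s(Ann.L φ, Ann.R ψ) := by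
  have := h (OLComp.OLA X) (fun x => OLComp.OLA.mk (Formula.var x))
  rw [OLComp.eval_mk, OLComp.eval_mk] at this
  exact this
end

section
/- Completeness of orthologic with non-logical axioms: let A be a set of sequents. If every valuation v into every ortholattice that satisfies all sequents of A also satisfies v(φ) ≤ v(ψ), then the sequent (φ^L, ψ^R) is provable in the orthologic proof system augmented with each sequent of A as an axiom rule. -/
namespace OLCompl
variable {X : Type}

theorem swapPf {A : Set (Sequent X)} {a b : Ann X} (h : OLProof A s(a, b)) :
    OLProof A s(b, a) := Sym2.eq_swap ▸ h

/-- Provable entailment. -/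
def Le (A : Set (Sequent X)) (φ ψ : Formula X) : Prop :=
  OLProof A s(Ann.L φ, Ann.R ψ)

variable {A : Set (Sequent X)}

theorem Le.rfl' (φ : Formula X) : Le A φ φ := OLProof.hyp φ

theorem Le.trans' {φ ψ χ : Formula X} (h1 : Le A φ ψ) (h2 : Le A ψ χ) : Le A φ χ :=
  OLProof.cut _ _ ψ h1 h2

theorem inf_le_l {φ ψ : Formula X} : Le A (φ.and ψ) φ :=
  OLProof.andL₁ _ _ _ (OLProof.hyp φ)

theorem inf_le_r {φ ψ : Formula X} : Le A (φ.and ψ) ψ :=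
  OLProof.andL₂ _ _ _ (OLProof.hyp ψ)

theorem le_inf' {χ φ ψ : Formula X} (h1 : Le A χ φ) (h2 : Le A χ ψ) : Le A χ (φ.and ψ) :=
  OLProof.andR _ _ _ h1 h2

theorem le_sup_l {φ ψ : Formula X} : Le A φ (φ.or ψ) :=
  OLProof.orR₁ _ _ _ (OLProof.hyp φ)

theorem le_sup_r {φ ψ : Formula X} : Le A ψ (φ.or ψ) :=
  OLProof.orR₂ _ _ _ (OLProof.hyp ψ)

theorem sup_le' {φ ψ χ : Formula X} (h1 : Le A φ χ) (h2 : Le A ψ χ) : Le A (φ.or ψ) χ :=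
  OLProof.orL _ _ _ h1 h2

theorem bot_le' {φ : Formula X} : Le A Formula.bot φ := OLProof.botL _

theorem le_top' {φ : Formula X} : Le A φ Formula.top := OLProof.topR _

theorem le_nn {φ : Formula X} : Le A φ φ.not.not := by
  have h1 : OLProof A s(Ann.L φ, Ann.L φ.not) := OLProof.negL _ φ (OLProof.hyp φ)
  have h2 : OLProof A s(Ann.R φ.not.not, Ann.L φ) :=
    OLProof.negR φ.not (Ann.L φ) (swapPf h1)
  exact swapPf h2

theorem nn_le {φ : Formula X} : Le A φ.not.not φ := by
  have h1 : OLProof A s(Ann.R φ.not, Ann.R φ) := OLProof.negR φ (Ann.R φ) (OLProof.hyp φ)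
  have h2 : OLProof A s(Ann.R φ, Ann.L φ.not.not) :=
    OLProof.negL (Ann.R φ) φ.not (swapPf h1)
  exact swapPf h2

theorem not_mono {φ ψ : Formula X} (h : Le A φ ψ) : Le A ψ.not φ.not := by
  have h1 : OLProof A s(Ann.L φ, Ann.L ψ.not) := OLProof.negL (Ann.L φ) ψ h
  have h2 : OLProof A s(Ann.R φ.not, Ann.L ψ.not) :=
    OLProof.negR φ (Ann.L ψ.not) (swapPf (swapPf h1))
  exact swapPf h2

/-- From two left-annotated formulas, their conjunction is absurd. -/
theorem andLL_bot {φ ψ : Formula X} (h : OLProof A s(Ann.L φ, Ann.L ψ)) :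
    Le A (φ.and ψ) Formula.bot := by
  have h1 : OLProof A s(Ann.L (φ.and ψ), Ann.R φ) := OLProof.andL₁ _ _ _ (OLProof.hyp φ)
  have h2 : OLProof A s(Ann.L (φ.and ψ), Ann.L φ) := OLProof.andL₂ φ ψ (Ann.L φ) (swapPf h)
  have h3 : OLProof A s(Ann.L (φ.and ψ), Ann.L (φ.and ψ)) :=
    OLProof.cut _ _ φ h1 (swapPf h2)
  exact OLProof.replace _ _ h3

/-- From two right-annotated formulas, their disjunction is valid. -/
theorem orRR_top {φ ψ : Formula X} (h : OLProof A s(Ann.R φ, Ann.R ψ)) :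
    Le A Formula.top (φ.or ψ) := by
  have h1 : OLProof A s(Ann.R φ, Ann.R (φ.or ψ)) := OLProof.orR₂ (Ann.R φ) φ ψ h
  have h2 : OLProof A s(Ann.L φ, Ann.R (φ.or ψ)) := OLProof.orR₁ _ φ ψ (OLProof.hyp φ)
  have h3 : OLProof A s(Ann.R (φ.or ψ), Ann.R (φ.or ψ)) :=
    OLProof.cut _ _ φ (swapPf h1) h2
  exact swapPf (OLProof.replace _ (Ann.L Formula.top) h3)

theorem inf_compl_le_bot (φ : Formula X) : Le A (φ.and φ.not) Formula.bot :=
  andLL_bot (OLProof.negL (Ann.L φ) φ (OLProof.hyp φ))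

theorem top_le_sup_compl (φ : Formula X) : Le A Formula.top (φ.or φ.not) :=
  orRR_top (swapPf (OLProof.negR φ (Ann.R φ) (OLProof.hyp φ)))

/-- Lindenbaum setoid. -/
def olSetoid (A : Set (Sequent X)) : Setoid (Formula X) where
  r φ ψ := Le A φ ψ ∧ Le A ψ φ
  iseqv := ⟨fun φ => ⟨Le.rfl' φ, Le.rfl' φ⟩, fun h => ⟨h.2, h.1⟩,
    fun h1 h2 => ⟨h1.1.trans' h2.1, h2.2.trans' h1.2⟩⟩

/-- The Lindenbaum–Tarski algebra. -/
def OL (A : Set (Sequent X)) : Type := Quotient (olSetoid A)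

def OL.mk (A : Set (Sequent X)) (φ : Formula X) : OL A := Quotient.mk (olSetoid A) φ

theorem le_sound {φ φ' ψ ψ' : Formula X} (h1 : (olSetoid A).r φ φ')
    (h2 : (olSetoid A).r ψ ψ') : Le A φ ψ = Le A φ' ψ' :=
  propext ⟨fun h => h1.2.trans' (h.trans' h2.1), fun h => h1.1.trans' (h.trans' h2.2)⟩

instance (A : Set (Sequent X)) : PartialOrder (OL A) where
  le := Quotient.lift₂ (Le A) fun _ _ _ _ h1 h2 => le_sound h1 h2
  le_refl x := Quotient.inductionOn x fun φ => Le.rfl' φ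
  le_trans x y z := Quotient.inductionOn₃ x y z fun _ _ _ h1 h2 => Le.trans' h1 h2
  le_antisymm x y := Quotient.inductionOn₂ x y fun _ _ h1 h2 => Quotient.sound ⟨h1, h2⟩

theorem and_congr {φ φ' ψ ψ' : Formula X} (h1 : (olSetoid A).r φ φ')
    (h2 : (olSetoid A).r ψ ψ') : (olSetoid A).r (φ.and ψ) (φ'.and ψ') :=
  ⟨le_inf' (inf_le_l.trans' h1.1) (inf_le_r.trans' h2.1),
   le_inf' (inf_le_l.trans' h1.2) (inf_le_r.trans' h2.2)⟩

theorem or_congr {φ φ' ψ ψ' : Formula X} (h1 : (olSetoid A).r φ φ')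
    (h2 : (olSetoid A).r ψ ψ') : (olSetoid A).r (φ.or ψ) (φ'.or ψ') :=
  ⟨sup_le' (h1.1.trans' le_sup_l) (h2.1.trans' le_sup_r),
   sup_le' (h1.2.trans' le_sup_l) (h2.2.trans' le_sup_r)⟩

instance (A : Set (Sequent X)) : Lattice (OL A) where
  inf := Quotient.map₂ Formula.and fun _ _ h1 _ _ h2 => and_congr h1 h2
  sup := Quotient.map₂ Formula.or fun _ _ h1 _ _ h2 => or_congr h1 h2
  inf_le_left x y := Quotient.inductionOn₂ x y fun _ _ => inf_le_l
  inf_le_right x y := Quotient.inductionOn₂ x y fun _ _ => inf_le_r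
  le_inf x y z := Quotient.inductionOn₃ x y z fun _ _ _ h1 h2 => le_inf' h1 h2
  le_sup_left x y := Quotient.inductionOn₂ x y fun φ ψ => show Le A φ (φ.or ψ) from le_sup_l
  le_sup_right x y := Quotient.inductionOn₂ x y fun φ ψ => show Le A ψ (φ.or ψ) from le_sup_r
  sup_le x y z := Quotient.inductionOn₃ x y z fun φ ψ χ h1 h2 => show Le A (φ.or ψ) χ from sup_le' h1 h2

instance (A : Set (Sequent X)) : BoundedOrder (OL A) where
  top := OL.mk A Formula.top
  bot := OL.mk A Formula.bot
  le_top x := Quotient.inductionOn x fun φ => show Le A φ Formula.top from le_top'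
  bot_le x := Quotient.inductionOn x fun φ => show Le A Formula.bot φ from bot_le'

theorem not_congr {φ φ' : Formula X} (h : (olSetoid A).r φ φ') :
    (olSetoid A).r φ.not φ'.not := ⟨not_mono h.2, not_mono h.1⟩

instance (A : Set (Sequent X)) : Ortholattice (OL A) where
  compl := Quotient.map Formula.not fun _ _ h => not_congr h
  compl_compl x := Quotient.inductionOn x fun φ => Quotient.sound ⟨nn_le, le_nn⟩
  compl_sup x y := Quotient.inductionOn₂ x y fun φ ψ => Quotient.sound
    ⟨show Le A (φ.or ψ).not (φ.not.and ψ.not) from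
       le_inf' (not_mono le_sup_l) (not_mono le_sup_r),
     show Le A (φ.not.and ψ.not) (φ.or ψ).not from
       Le.trans' le_nn (not_mono (sup_le' (Le.trans' le_nn (not_mono inf_le_l))
         (Le.trans' le_nn (not_mono inf_le_r))))⟩
  compl_inf x y := Quotient.inductionOn₂ x y fun φ ψ => Quotient.sound
    ⟨show Le A (φ.and ψ).not (φ.not.or ψ.not) from
       Le.trans' (not_mono (le_inf' (Le.trans' (not_mono le_sup_l) nn_le)
         (Le.trans' (not_mono le_sup_r) nn_le))) nn_le,
     show Le A (φ.not.or ψ.not) (φ.and ψ).not from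
       sup_le' (not_mono inf_le_l) (not_mono inf_le_r)⟩
  inf_compl x := Quotient.inductionOn x fun φ => Quotient.sound
    ⟨inf_compl_le_bot φ, bot_le'⟩
  sup_compl x := Quotient.inductionOn x fun φ => Quotient.sound
    ⟨le_top', top_le_sup_compl φ⟩

theorem eval_mk (A : Set (Sequent X)) (χ : Formula X) :
    Formula.eval (fun x => OL.mk A (Formula.var x)) χ = OL.mk A χ := by
  induction χ with
  | var x => rfl
  | bot => rfl
  | top => rfl
  | and φ ψ ih1 ih2 =>
      show Formula.eval _ φ ⊓ Formula.eval _ ψ = _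
      rw [ih1, ih2]; rfl
  | or φ ψ ih1 ih2 =>
      show Formula.eval _ φ ⊔ Formula.eval _ ψ = _
      rw [ih1, ih2]; rfl
  | not φ ih =>
      show Ortholattice.compl (Formula.eval _ φ) = _
      rw [ih]; rfl

end OLCompl
/-- Completeness of orthologic with non-logical axioms `A`: if
every valuation into every ortholattice satisfying all sequents of `A` also
satisfies `v(φ) ≤ v(ψ)`, then `(φ^L, ψ^R)` is provable from `A`. -/
theorem ol_completeness_with_axioms {X : Type} [Countable X] [Infinite X]
    (A : Set (Sequent X)) (φ ψ : Formula X)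
    (h : ∀ (L : Type) [Ortholattice L] (v : X → L),
      (∀ u ∈ A, SeqSat v u) → φ.eval v ≤ ψ.eval v) :
    OLProof A s(Ann.L φ, Ann.R ψ) := by
  have hsat : ∀ u ∈ A, SeqSat (fun x => OLCompl.OL.mk A (Formula.var x)) u := by
    intro u hu a b hab
    rw [hab] at hu
    have hp : OLProof A s(a, b) := OLProof.ax hu
    cases a with
    | L φa =>
      cases b with
      | L φb =>
        show Formula.eval _ φa ⊓ Formula.eval _ φb = ⊥
        rw [OLCompl.eval_mk, OLCompl.eval_mk]
        exact (Quotient.sound ⟨OLCompl.andLL_bot hp, OLCompl.bot_le'⟩ :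
          OLCompl.OL.mk A (Formula.and φa φb) = OLCompl.OL.mk A Formula.bot)
      | R φb =>
        show Formula.eval _ φa ≤ Formula.eval _ φb
        rw [OLCompl.eval_mk, OLCompl.eval_mk]
        exact hp
    | R φa =>
      cases b with
      | L φb =>
        show Formula.eval _ φb ≤ Formula.eval _ φa
        rw [OLCompl.eval_mk, OLCompl.eval_mk]
        exact OLCompl.swapPf hp
      | R φb =>
        show Formula.eval _ φa ⊔ Formula.eval _ φb = ⊤
        rw [OLCompl.eval_mk, OLCompl.eval_mk]
        exact (Quotient.sound ⟨OLCompl.le_top', OLCompl.orRR_top hp⟩ :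
          OLCompl.OL.mk A (Formula.or φa φb) = OLCompl.OL.mk A Formula.top)
  have key := h (OLCompl.OL A) (fun x => OLCompl.OL.mk A (Formula.var x)) hsat
  rw [OLCompl.eval_mk, OLCompl.eval_mk] at key
  exact key
end

section
/- Partial cut elimination for orthologic with axioms: if a sequent (Γ, Δ) has a proof in the orthologic proof system with non-logical axioms A, then it has a proof in which, in every instance of the Cut rule, the cut formula φ occurs in one of the sequents of A. -/
/-- The orthologic proof system where every cut formula must satisfy `C`. -/
inductive OLProofCut {X : Type} (A : Set (Sequent X)) (C : Formula X → Prop) :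
    Sequent X → Prop
  | ax {t : Sequent X} : t ∈ A → OLProofCut A C t
  | hyp (φ : Formula X) : OLProofCut A C s(Ann.L φ, Ann.R φ)
  | cut (Γ Δ : Ann X) (φ : Formula X) : C φ →
      OLProofCut A C s(Γ, Ann.R φ) → OLProofCut A C s(Ann.L φ, Δ) → OLProofCut A C s(Γ, Δ)
  | replace (Γ Δ : Ann X) : OLProofCut A C s(Γ, Γ) → OLProofCut A C s(Γ, Δ)
  | andL₁ (φ ψ : Formula X) (Δ : Ann X) :
      OLProofCut A C s(Ann.L φ, Δ) → OLProofCut A C s(Ann.L (φ.and ψ), Δ)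
  | andL₂ (φ ψ : Formula X) (Δ : Ann X) :
      OLProofCut A C s(Ann.L ψ, Δ) → OLProofCut A C s(Ann.L (φ.and ψ), Δ)
  | andR (Γ : Ann X) (φ ψ : Formula X) :
      OLProofCut A C s(Γ, Ann.R φ) → OLProofCut A C s(Γ, Ann.R ψ) →
      OLProofCut A C s(Γ, Ann.R (φ.and ψ))
  | orL (φ ψ : Formula X) (Δ : Ann X) :
      OLProofCut A C s(Ann.L φ, Δ) → OLProofCut A C s(Ann.L ψ, Δ) →
      OLProofCut A C s(Ann.L (φ.or ψ), Δ)
  | orR₁ (Γ : Ann X) (φ ψ : Formula X) :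
      OLProofCut A C s(Γ, Ann.R φ) → OLProofCut A C s(Γ, Ann.R (φ.or ψ))
  | orR₂ (Γ : Ann X) (φ ψ : Formula X) :
      OLProofCut A C s(Γ, Ann.R ψ) → OLProofCut A C s(Γ, Ann.R (φ.or ψ))
  | negL (Γ : Ann X) (φ : Formula X) :
      OLProofCut A C s(Γ, Ann.R φ) → OLProofCut A C s(Γ, Ann.L φ.not)
  | negR (φ : Formula X) (Δ : Ann X) :
      OLProofCut A C s(Ann.L φ, Δ) → OLProofCut A C s(Ann.R φ.not, Δ)
  | botL (Δ : Ann X) : OLProofCut A C s(Ann.L Formula.bot, Δ)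
  | topR (Γ : Ann X) : OLProofCut A C s(Γ, Ann.R Formula.top)

/-- The orthologic proof system where every sequent occurring in the proof
(i.e. the conclusion of every rule instance) must lie in `S`. -/
inductive OLProofIn {X : Type} (A : Set (Sequent X)) (S : Set (Sequent X)) :
    Sequent X → Prop
  | ax {t : Sequent X} : t ∈ A → t ∈ S → OLProofIn A S t
  | hyp (φ : Formula X) : s(Ann.L φ, Ann.R φ) ∈ S → OLProofIn A S s(Ann.L φ, Ann.R φ)
  | cut (Γ Δ : Ann X) (φ : Formula X) : s(Γ, Δ) ∈ S →
      OLProofIn A S s(Γ, Ann.R φ) → OLProofIn A S s(Ann.L φ, Δ) → OLProofIn A S s(Γ, Δ)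
  | replace (Γ Δ : Ann X) : s(Γ, Δ) ∈ S → OLProofIn A S s(Γ, Γ) → OLProofIn A S s(Γ, Δ)
  | andL₁ (φ ψ : Formula X) (Δ : Ann X) : s(Ann.L (φ.and ψ), Δ) ∈ S →
      OLProofIn A S s(Ann.L φ, Δ) → OLProofIn A S s(Ann.L (φ.and ψ), Δ)
  | andL₂ (φ ψ : Formula X) (Δ : Ann X) : s(Ann.L (φ.and ψ), Δ) ∈ S →
      OLProofIn A S s(Ann.L ψ, Δ) → OLProofIn A S s(Ann.L (φ.and ψ), Δ)
  | andR (Γ : Ann X) (φ ψ : Formula X) : s(Γ, Ann.R (φ.and ψ)) ∈ S →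
      OLProofIn A S s(Γ, Ann.R φ) → OLProofIn A S s(Γ, Ann.R ψ) →
      OLProofIn A S s(Γ, Ann.R (φ.and ψ))
  | orL (φ ψ : Formula X) (Δ : Ann X) : s(Ann.L (φ.or ψ), Δ) ∈ S →
      OLProofIn A S s(Ann.L φ, Δ) → OLProofIn A S s(Ann.L ψ, Δ) →
      OLProofIn A S s(Ann.L (φ.or ψ), Δ)
  | orR₁ (Γ : Ann X) (φ ψ : Formula X) : s(Γ, Ann.R (φ.or ψ)) ∈ S →
      OLProofIn A S s(Γ, Ann.R φ) → OLProofIn A S s(Γ, Ann.R (φ.or ψ))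
  | orR₂ (Γ : Ann X) (φ ψ : Formula X) : s(Γ, Ann.R (φ.or ψ)) ∈ S →
      OLProofIn A S s(Γ, Ann.R ψ) → OLProofIn A S s(Γ, Ann.R (φ.or ψ))
  | negL (Γ : Ann X) (φ : Formula X) : s(Γ, Ann.L φ.not) ∈ S →
      OLProofIn A S s(Γ, Ann.R φ) → OLProofIn A S s(Γ, Ann.L φ.not)
  | negR (φ : Formula X) (Δ : Ann X) : s(Ann.R φ.not, Δ) ∈ S →
      OLProofIn A S s(Ann.L φ, Δ) → OLProofIn A S s(Ann.R φ.not, Δ)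
  | botL (Δ : Ann X) : s(Ann.L Formula.bot, Δ) ∈ S → OLProofIn A S s(Ann.L Formula.bot, Δ)
  | topR (Γ : Ann X) : s(Γ, Ann.R Formula.top) ∈ S → OLProofIn A S s(Γ, Ann.R Formula.top)
namespace OLCutElim

variable {X : Type}

/-- The cut-formula condition: the formula occurs in one of the axioms. -/
def Cond (A : Set (Sequent X)) : Formula X → Prop :=
  fun φ => ∃ u ∈ A, ∃ a ∈ u, Ann.fml a = φ

/-- Abbreviation for cut-restricted provability. -/
def Pr (A : Set (Sequent X)) (t : Sequent X) : Prop := OLProofCut A (Cond A) t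

lemma pswap {A : Set (Sequent X)} {a b : Ann X} (h : Pr A s(a, b)) : Pr A s(b, a) :=
  Sym2.eq_swap ▸ h

/-- Orthogonality complement of a set of annotated formulas. -/
def orth (A : Set (Sequent X)) (S : Set (Ann X)) : Set (Ann X) :=
  {b | ∀ a ∈ S, Pr A s(a, b)}

lemma orth_anti {A : Set (Sequent X)} {S T : Set (Ann X)} (h : S ⊆ T) :
    orth A T ⊆ orth A S := fun b hb a ha => hb a (h ha)

lemma subset_orth_orth {A : Set (Sequent X)} (S : Set (Ann X)) :
    S ⊆ orth A (orth A S) := fun a ha b hb => pswap (hb a ha)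

lemma orth3 {A : Set (Sequent X)} (S : Set (Ann X)) :
    orth A (orth A (orth A S)) ⊆ orth A S :=
  orth_anti (subset_orth_orth S)

/-- Okada-style interpretation of a formula as a set of annotated formulas. -/
def E (A : Set (Sequent X)) : Formula X → Set (Ann X)
  | .var x => orth A (orth A {Ann.L (.var x)})
  | .bot => orth A Set.univ
  | .top => orth A ∅
  | .and φ ψ => E A φ ∩ E A ψ
  | .or φ ψ => orth A (orth A (E A φ ∪ E A ψ))
  | .not φ => orth A (E A φ)

/-- Key lemma: `L φ ∈ E φ`, `E φ ⊆ {R φ}ᗮ`, and `E φ` is closed. -/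
lemma key (A : Set (Sequent X)) (φ : Formula X) :
    Ann.L φ ∈ E A φ ∧ (∀ a ∈ E A φ, Pr A s(a, Ann.R φ)) ∧
      orth A (orth A (E A φ)) ⊆ E A φ := by
  induction φ with
  | var x =>
    refine ⟨subset_orth_orth _ rfl, ?_, orth3 _⟩
    intro a ha
    exact pswap (ha (Ann.R (.var x)) (fun c hc => by
      rw [Set.mem_singleton_iff] at hc; subst hc; exact .hyp _))
  | bot =>
    refine ⟨?_, ?_, orth3 _⟩
    · intro a _; exact pswap (.botL a)
    · intro a ha; exact pswap (ha (Ann.R .bot) trivial)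
  | top =>
    refine ⟨?_, ?_, orth3 _⟩
    · intro a ha; exact absurd ha (Set.notMem_empty a)
    · intro a _; exact .topR a
  | and φ ψ ihφ ihψ =>
    obtain ⟨h1φ, h2φ, h3φ⟩ := ihφ
    obtain ⟨h1ψ, h2ψ, h3ψ⟩ := ihψ
    refine ⟨⟨?_, ?_⟩, ?_, ?_⟩
    · exact h3φ (fun c hc => pswap (.andL₁ φ ψ c (hc _ h1φ)))
    · exact h3ψ (fun c hc => pswap (.andL₂ φ ψ c (hc _ h1ψ)))
    · intro a ha
      exact .andR a φ ψ (h2φ a ha.1) (h2ψ a ha.2)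
    · intro a ha
      constructor
      · exact h3φ (fun c hc => ha c (orth_anti Set.inter_subset_left hc))
      · exact h3ψ (fun c hc => ha c (orth_anti Set.inter_subset_right hc))
  | or φ ψ ihφ ihψ =>
    obtain ⟨h1φ, h2φ, _⟩ := ihφ
    obtain ⟨h1ψ, h2ψ, _⟩ := ihψ
    refine ⟨?_, ?_, orth3 _⟩
    · intro c hc
      exact pswap (.orL φ ψ c (hc _ (Set.mem_union_left _ h1φ))
        (hc _ (Set.mem_union_right _ h1ψ)))
    · intro a ha
      refine pswap (ha (Ann.R (φ.or ψ)) ?_)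
      rintro b (hb | hb)
      · exact .orR₁ b φ ψ (h2φ b hb)
      · exact .orR₂ b φ ψ (h2ψ b hb)
  | not φ ihφ =>
    obtain ⟨h1φ, h2φ, _⟩ := ihφ
    refine ⟨?_, ?_, orth3 _⟩
    · intro b hb; exact .negL b φ (h2φ b hb)
    · intro a ha; exact pswap (.negR φ a (ha _ h1φ))

/-- Denotation of an annotated formula. -/
def den (A : Set (Sequent X)) : Ann X → Set (Ann X)
  | .L φ => E A φ
  | .R φ => orth A (E A φ)

lemma den_self (A : Set (Sequent X)) (a : Ann X) : a ∈ den A a := by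
  cases a with
  | L φ => exact (key A φ).1
  | R φ => exact (key A φ).2.1

/-- The negation partner of an annotated formula. -/
def aneg : Ann X → Ann X
  | .L φ => .R φ
  | .R φ => .L φ

lemma den_orth (A : Set (Sequent X)) (a : Ann X) {c : Ann X} (hc : c ∈ den A a) :
    Pr A s(c, aneg a) := by
  cases a with
  | L φ => exact (key A φ).2.1 c hc
  | R φ => exact pswap (hc _ (key A φ).1)

/-- The semantic invariant for sequents. -/
def Sat (A : Set (Sequent X)) (t : Sequent X) : Prop :=
  ∀ a b : Ann X, t = s(a, b) → ∀ c ∈ den A a, ∀ d ∈ den A b, Pr A s(c, d)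

lemma sat_mk {A : Set (Sequent X)} {a b : Ann X}
    (h : ∀ c ∈ den A a, ∀ d ∈ den A b, Pr A s(c, d)) : Sat A s(a, b) := by
  intro a' b' he c hc d hd
  rcases Sym2.eq_iff.mp he with ⟨h1, h2⟩ | ⟨h1, h2⟩
  · subst h1; subst h2; exact h c hc d hd
  · subst h1; subst h2; exact pswap (h d hd c hc)

lemma sat_elim {A : Set (Sequent X)} {a b : Ann X} (h : Sat A s(a, b)) :
    ∀ c ∈ den A a, ∀ d ∈ den A b, Pr A s(c, d) := h a b rfl

/-- A member of `den Γ` lies in `E φ` whenever the sequent `(Γ, R φ)` is satisfied. -/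
lemma sat_right {A : Set (Sequent X)} {Γ : Ann X} {φ : Formula X}
    (h : Sat A s(Γ, Ann.R φ)) {c : Ann X} (hc : c ∈ den A Γ) : c ∈ E A φ :=
  (key A φ).2.2 (fun d hd => pswap (sat_elim h c hc d hd))

lemma cond_left {A : Set (Sequent X)} {a b : Ann X} (h : s(a, b) ∈ A) :
    Cond A a.fml := ⟨s(a, b), h, a, Sym2.mem_mk_left a b, rfl⟩

lemma cond_right {A : Set (Sequent X)} {a b : Ann X} (h : s(a, b) ∈ A) :
    Cond A b.fml := ⟨s(a, b), h, b, Sym2.mem_mk_right a b, rfl⟩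

/-- Soundness of the full system for the semantic invariant. -/
lemma soundness {A : Set (Sequent X)} {t : Sequent X} (h : OLProof A t) : Sat A t := by
  induction h with
  | @ax t ht =>
    intro a b he; subst he
    intro c hc d hd
    have hca : Pr A s(c, aneg a) := den_orth A a hc
    have hdb : Pr A s(d, aneg b) := den_orth A b hd
    have hax : Pr A s(a, b) := .ax ht
    have e : Pr A s(c, b) := by
      cases a with
      | L φ => exact .cut c b φ (cond_left ht) hca hax
      | R φ => exact pswap (.cut b c φ (cond_left ht) (pswap hax) (pswap hca))
    cases b with
    | L ψ => exact pswap (.cut d c ψ (cond_right ht) hdb (pswap e))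
    | R ψ => exact .cut c d ψ (cond_right ht) e (pswap hdb)
  | hyp φ =>
    exact sat_mk (fun c hc d hd => hd c hc)
  | cut Γ Δ φ h1 h2 ih1 ih2 =>
    exact sat_mk (fun c hc d hd => sat_elim ih2 c (sat_right ih1 hc) d hd)
  | replace Γ Δ h ih =>
    exact sat_mk (fun c hc d hd => .replace c d (sat_elim ih c hc c hc))
  | andL₁ φ ψ Δ h ih =>
    exact sat_mk (fun c hc d hd => sat_elim ih c hc.1 d hd)
  | andL₂ φ ψ Δ h ih =>
    exact sat_mk (fun c hc d hd => sat_elim ih c hc.2 d hd)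
  | andR Γ φ ψ h1 h2 ih1 ih2 =>
    exact sat_mk (fun c hc d hd => hd c ⟨sat_right ih1 hc, sat_right ih2 hc⟩)
  | orL φ ψ Δ h1 h2 ih1 ih2 =>
    refine sat_mk (fun c hc d hd => pswap (hc d ?_))
    rintro b (hb | hb)
    · exact sat_elim ih1 b hb d hd
    · exact sat_elim ih2 b hb d hd
  | orR₁ Γ φ ψ h ih =>
    refine sat_mk (fun c hc d hd => ?_)
    exact hd c (subset_orth_orth _ (Set.mem_union_left _ (sat_right ih hc)))
  | orR₂ Γ φ ψ h ih =>
    refine sat_mk (fun c hc d hd => ?_)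
    exact hd c (subset_orth_orth _ (Set.mem_union_right _ (sat_right ih hc)))
  | negL Γ φ h ih =>
    exact sat_mk (fun c hc d hd => hd c (sat_right ih hc))
  | negR φ Δ h ih =>
    refine sat_mk (fun c hc d hd => ?_)
    exact sat_elim ih c ((key A φ).2.2 hc) d hd
  | botL Δ =>
    exact sat_mk (fun c hc d hd => pswap (hc d trivial))
  | topR Γ =>
    exact sat_mk (fun c hc d hd => hd c (fun e he => absurd he (Set.notMem_empty e)))

lemma completeness {A : Set (Sequent X)} {t : Sequent X} (h : Sat A t) : Pr A t := by
  induction t using Sym2.inductionOn with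
  | hf a b => exact h a b rfl a (den_self A a) b (den_self A b)

end OLCutElim

/-- Partial cut elimination: a sequent provable from axioms `A`
has a proof in which every cut formula occurs in one of the sequents of `A`. -/
theorem ol_partial_cut_elimination {X : Type} [Countable X] [Infinite X]
    (A : Set (Sequent X)) (t : Sequent X) (h : OLProof A t) :
    OLProofCut A (fun φ => ∃ u ∈ A, ∃ a ∈ u, Ann.fml a = φ) t :=
  OLCutElim.completeness (OLCutElim.soundness h)
end

section
/- Cut elimination for orthologic without axioms: a sequent is provable in the orthologic proof system (without non-logical axioms) if and only if it has a proof that contains no instance of the Cut rule. -/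
namespace OLCE

variable {X : Type}

/-- Cut-free provability. -/
abbrev CFp (t : Sequent X) : Prop := OLProofCut (∅ : Set (Sequent X)) (fun _ => False) t

lemma CFp.swap {a b : Ann X} (h : CFp s(a, b)) : CFp s(b, a) := by
  rwa [Sym2.eq_swap]

/-- Orthogonality operator. -/
def op (A : Set (Ann X)) : Set (Ann X) := {b | ∀ a ∈ A, CFp s(a, b)}

lemma op_anti {A B : Set (Ann X)} (h : A ⊆ B) : op B ⊆ op A :=
  fun c hc a ha => hc a (h ha)

lemma subset_opop (A : Set (Ann X)) : A ⊆ op (op A) :=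
  fun a ha c hc => (hc a ha).swap

lemma op_op_op (A : Set (Ann X)) : op (op (op A)) = op A :=
  Set.Subset.antisymm (op_anti (subset_opop A)) (subset_opop (op A))

lemma cl_sup_closed' (S : Set (Ann X)) : op (op (op (op S))) = op (op S) :=
  congrArg op (op_op_op S)

lemma op_union (A B : Set (Ann X)) : op (A ∪ B) = op A ∩ op B := by
  ext c
  constructor
  · intro hc
    exact ⟨fun a ha => hc a (Or.inl ha), fun a ha => hc a (Or.inr ha)⟩
  · rintro ⟨h1, h2⟩ a (ha | ha)
    · exact h1 a ha
    · exact h2 a ha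

/-- Closed sets of annotated formulas. -/
def Cl (X : Type) : Type := {A : Set (Ann X) // op (op A) = A}

lemma closed_inter {A B : Set (Ann X)} (hA : op (op A) = A) (hB : op (op B) = B) :
    op (op (A ∩ B)) = A ∩ B := by
  apply Set.Subset.antisymm
  · intro c hc
    constructor
    · exact hA ▸ (op_anti (op_anti Set.inter_subset_left) hc)
    · exact hB ▸ (op_anti (op_anti Set.inter_subset_right) hc)
  · exact subset_opop _

instance : Lattice (Cl X) where
  le A B := A.1 ⊆ B.1
  le_refl A := Set.Subset.refl _
  le_trans A B C h1 h2 := Set.Subset.trans h1 h2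
  le_antisymm A B h1 h2 := Subtype.ext (Set.Subset.antisymm h1 h2)
  inf A B := ⟨A.1 ∩ B.1, closed_inter A.2 B.2⟩
  inf_le_left A B := Set.inter_subset_left
  inf_le_right A B := Set.inter_subset_right
  le_inf A B C h1 h2 := Set.subset_inter h1 h2
  sup A B := ⟨op (op (A.1 ∪ B.1)), cl_sup_closed' (A.1 ∪ B.1)⟩
  le_sup_left A B := Set.Subset.trans Set.subset_union_left (subset_opop _)
  le_sup_right A B := Set.Subset.trans Set.subset_union_right (subset_opop _)
  sup_le A B C h1 h2 := by
    intro c hc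
    exact C.2 ▸ (op_anti (op_anti (Set.union_subset h1 h2)) hc)

instance : BoundedOrder (Cl X) where
  top := ⟨Set.univ, Set.Subset.antisymm (Set.subset_univ _) (subset_opop _)⟩
  le_top A := fun x _ => trivial
  bot := ⟨op Set.univ, op_op_op Set.univ⟩
  bot_le A := by
    intro b hb
    have h : b ∈ op (op A.1) := fun c _ => hb c trivial
    exact A.2 ▸ h

instance : Ortholattice (Cl X) where
  compl A := ⟨op A.1, op_op_op A.1⟩
  compl_compl A := Subtype.ext A.2
  compl_sup A B := by
    apply Subtype.ext
    dsimp only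
    show op (op (op (A.1 ∪ B.1))) = op A.1 ∩ op B.1
    rw [op_op_op, op_union]
  compl_inf A B := by
    apply Subtype.ext
    dsimp only
    show op (A.1 ∩ B.1) = op (op (op A.1 ∪ op B.1))
    have h : A.1 ∩ B.1 = op (op A.1 ∪ op B.1) := by
      rw [op_union, A.2, B.2]
    rw [h]
  inf_compl A := by
    apply Subtype.ext
    show A.1 ∩ op A.1 = op Set.univ
    apply Set.Subset.antisymm
    · rintro x ⟨hx, hox⟩ a _
      have hxx : CFp s(x, x) := hox x hx
      exact CFp.swap (OLProofCut.replace x a hxx)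
    · intro b hb
      exact ⟨A.2 ▸ (fun c _ => hb c trivial), fun a _ => hb a trivial⟩
  sup_compl A := by
    apply Subtype.ext
    show op (op (A.1 ∪ op A.1)) = Set.univ
    apply Set.eq_univ_of_forall
    intro b c hc
    have hcA : c ∈ op A.1 := fun a ha => hc a (Or.inl ha)
    have hcc : CFp s(c, c) := hc c (Or.inr hcA)
    exact OLProofCut.replace c b hcc

section Sound

variable {L : Type} [Ortholattice L]

local notation "oc" => Ortholattice.compl

lemma oc_oc (a : L) : oc (oc a) = a := Ortholattice.compl_compl a

lemma oc_anti {a b : L} (h : a ≤ b) : oc b ≤ oc a := by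
  have hs : a ⊔ b = b := sup_eq_right.2 h
  calc oc b = oc (a ⊔ b) := by rw [hs]
    _ = oc a ⊓ oc b := Ortholattice.compl_sup a b
    _ ≤ oc a := inf_le_left

variable {X : Type} (v : X → L)

/-- semantic value of an annotated formula -/
def dnv : Ann X → L
  | .L φ => φ.eval v
  | .R φ => oc (φ.eval v)

lemma sat_symm {a b : L} (h : a ≤ oc b) : b ≤ oc a := by
  have := oc_anti h
  rwa [oc_oc] at this

lemma sat_of {c d a b : Ann X} (ht : s(c, d) = s(a, b))
    (h : dnv v c ≤ oc (dnv v d)) : dnv v a ≤ oc (dnv v b) := by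
  rcases Sym2.eq_iff.1 ht with ⟨rfl, rfl⟩ | ⟨rfl, rfl⟩
  · exact h
  · exact sat_symm h

theorem sound {t : Sequent X} (h : OLProof (∅ : Set (Sequent X)) t) :
    ∀ a b : Ann X, t = s(a, b) → dnv v a ≤ oc (dnv v b) := by
  induction h with
  | ax h => exact absurd h (Set.notMem_empty _)
  | hyp φ =>
    intro a b ht
    refine sat_of v ht ?_
    show φ.eval v ≤ oc (oc (φ.eval v))
    rw [oc_oc]
  | cut Γ Δ φ h1 h2 ih1 ih2 =>
    intro a b ht
    refine sat_of v ht ?_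
    have i1 := ih1 Γ (Ann.R φ) rfl
    have i2 := ih2 (Ann.L φ) Δ rfl
    rw [show dnv v (Ann.R φ) = oc (φ.eval v) from rfl, oc_oc] at i1
    exact le_trans i1 i2
  | replace Γ Δ h ih =>
    intro a b ht
    refine sat_of v ht ?_
    have i := ih Γ Γ rfl
    have hb : dnv v Γ ≤ ⊥ := by
      have : dnv v Γ ≤ dnv v Γ ⊓ oc (dnv v Γ) := le_inf le_rfl i
      rwa [Ortholattice.inf_compl] at this
    exact le_trans hb bot_le
  | andL₁ φ ψ Δ h ih =>
    intro a b ht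
    refine sat_of v ht ?_
    have i := ih (Ann.L φ) Δ rfl
    exact le_trans inf_le_left i
  | andL₂ φ ψ Δ h ih =>
    intro a b ht
    refine sat_of v ht ?_
    have i := ih (Ann.L ψ) Δ rfl
    exact le_trans inf_le_right i
  | andR Γ φ ψ h1 h2 ih1 ih2 =>
    intro a b ht
    refine sat_of v ht ?_
    have i1 := ih1 Γ (Ann.R φ) rfl
    have i2 := ih2 Γ (Ann.R ψ) rfl
    rw [show dnv v (Ann.R φ) = oc (φ.eval v) from rfl, oc_oc] at i1
    rw [show dnv v (Ann.R ψ) = oc (ψ.eval v) from rfl, oc_oc] at i2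
    show dnv v Γ ≤ oc (oc (φ.eval v ⊓ ψ.eval v))
    rw [oc_oc]
    exact le_inf i1 i2
  | orL φ ψ Δ h1 h2 ih1 ih2 =>
    intro a b ht
    refine sat_of v ht ?_
    have i1 := ih1 (Ann.L φ) Δ rfl
    have i2 := ih2 (Ann.L ψ) Δ rfl
    exact sup_le i1 i2
  | orR₁ Γ φ ψ h ih =>
    intro a b ht
    refine sat_of v ht ?_
    have i := ih Γ (Ann.R φ) rfl
    rw [show dnv v (Ann.R φ) = oc (φ.eval v) from rfl, oc_oc] at i
    show dnv v Γ ≤ oc (oc (φ.eval v ⊔ ψ.eval v))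
    rw [oc_oc]
    exact le_trans i le_sup_left
  | orR₂ Γ φ ψ h ih =>
    intro a b ht
    refine sat_of v ht ?_
    have i := ih Γ (Ann.R ψ) rfl
    rw [show dnv v (Ann.R ψ) = oc (ψ.eval v) from rfl, oc_oc] at i
    show dnv v Γ ≤ oc (oc (φ.eval v ⊔ ψ.eval v))
    rw [oc_oc]
    exact le_trans i le_sup_right
  | negL Γ φ h ih =>
    intro a b ht
    refine sat_of v ht ?_
    have i := ih Γ (Ann.R φ) rfl
    rw [show dnv v (Ann.R φ) = oc (φ.eval v) from rfl, oc_oc] at i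
    show dnv v Γ ≤ oc (oc (φ.eval v))
    rw [oc_oc]
    exact i
  | negR φ Δ h ih =>
    intro a b ht
    refine sat_of v ht ?_
    have i := ih (Ann.L φ) Δ rfl
    show oc (oc (φ.eval v)) ≤ oc (dnv v Δ)
    rw [oc_oc]
    exact i
  | botL Δ =>
    intro a b ht
    refine sat_of v ht ?_
    exact bot_le
  | topR Γ =>
    intro a b ht
    refine sat_of v ht ?_
    show dnv v Γ ≤ oc (oc (⊤ : L))
    rw [oc_oc]
    exact le_top

end Sound

variable {X : Type}

/-- canonical valuation -/
def cv (x : X) : Cl X := ⟨op (op {Ann.L (Formula.var x)}), cl_sup_closed' _⟩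

theorem truth (χ : Formula X) :
    Ann.L χ ∈ (Formula.eval cv χ).1 ∧
      ∀ a ∈ (Formula.eval cv χ).1, CFp s(a, Ann.R χ) := by
  induction χ with
  | var x =>
    constructor
    · exact subset_opop {Ann.L (Formula.var x)} rfl
    · intro a ha
      have hR : Ann.R (Formula.var x) ∈ op {Ann.L (Formula.var x)} := by
        intro c hc
        rw [Set.mem_singleton_iff] at hc
        subst hc
        exact OLProofCut.hyp _
      exact CFp.swap (ha _ hR)
  | bot =>
    constructor
    · intro a _
      exact CFp.swap (OLProofCut.botL a)
    · intro a ha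
      exact CFp.swap (ha (Ann.R Formula.bot) trivial)
  | top =>
    constructor
    · trivial
    · intro a _
      exact OLProofCut.topR a
  | and φ ψ ihφ ihψ =>
    have heval : (Formula.eval cv (φ.and ψ)).1 =
        (Formula.eval cv φ).1 ∩ (Formula.eval cv ψ).1 := rfl
    constructor
    · rw [heval]
      constructor
      · have h : Ann.L (φ.and ψ) ∈ op (op (Formula.eval cv φ).1) := by
          intro c hc
          exact CFp.swap (OLProofCut.andL₁ φ ψ c (hc _ ihφ.1))
        exact (Formula.eval cv φ).2 ▸ h
      · have h : Ann.L (φ.and ψ) ∈ op (op (Formula.eval cv ψ).1) := by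
          intro c hc
          exact CFp.swap (OLProofCut.andL₂ φ ψ c (hc _ ihψ.1))
        exact (Formula.eval cv ψ).2 ▸ h
    · rw [heval]
      rintro a ⟨h1, h2⟩
      exact OLProofCut.andR a φ ψ (ihφ.2 a h1) (ihψ.2 a h2)
  | or φ ψ ihφ ihψ =>
    have heval : (Formula.eval cv (φ.or ψ)).1 =
        op (op ((Formula.eval cv φ).1 ∪ (Formula.eval cv ψ).1)) := rfl
    constructor
    · rw [heval]
      intro c hc
      have h1 : CFp s(Ann.L φ, c) := hc _ (Or.inl ihφ.1)
      have h2 : CFp s(Ann.L ψ, c) := hc _ (Or.inr ihψ.1)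
      exact CFp.swap (OLProofCut.orL φ ψ c h1 h2)
    · rw [heval]
      intro a ha
      have hR : Ann.R (φ.or ψ) ∈ op ((Formula.eval cv φ).1 ∪ (Formula.eval cv ψ).1) := by
        rintro d (hd | hd)
        · exact OLProofCut.orR₁ d φ ψ (ihφ.2 d hd)
        · exact OLProofCut.orR₂ d φ ψ (ihψ.2 d hd)
      exact CFp.swap (ha _ hR)
  | not φ ihφ =>
    have heval : (Formula.eval cv φ.not).1 = op (Formula.eval cv φ).1 := rfl
    constructor
    · rw [heval]
      intro a ha
      exact OLProofCut.negL a φ (ihφ.2 a ha)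
    · rw [heval]
      intro a ha
      exact CFp.swap (OLProofCut.negR φ a (ha _ ihφ.1))

theorem complete (a b : Ann X) (h : OLProof (∅ : Set (Sequent X)) s(a, b)) :
    CFp s(a, b) := by
  have hs := sound (L := Cl X) cv h a b rfl
  match a, b with
  | Ann.L φ, Ann.R ψ =>
    have hsub : (Formula.eval cv φ).1 ⊆ (Formula.eval cv ψ).1 := by
      have : dnv cv (Ann.L φ) ≤
          Ortholattice.compl (dnv cv (Ann.R ψ)) := hs
      rw [show dnv cv (Ann.R ψ) = Ortholattice.compl (Formula.eval cv ψ) from rfl,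
        oc_oc] at this
      exact this
    exact (truth ψ).2 _ (hsub (truth φ).1)
  | Ann.L φ, Ann.L ψ =>
    have hsub : (Formula.eval cv φ).1 ⊆ op (Formula.eval cv ψ).1 := hs
    exact (CFp.swap (hsub (truth φ).1 _ (truth ψ).1))
  | Ann.R φ, Ann.R ψ =>
    have hsub : op (Formula.eval cv φ).1 ⊆ (Formula.eval cv ψ).1 := by
      have : dnv cv (Ann.R φ) ≤
          Ortholattice.compl (dnv cv (Ann.R ψ)) := hs
      rw [show dnv cv (Ann.R ψ) = Ortholattice.compl (Formula.eval cv ψ) from rfl,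
        oc_oc] at this
      exact this
    have hmem : Ann.R φ ∈ op (Formula.eval cv φ).1 := fun d hd => (truth φ).2 d hd
    exact (truth ψ).2 _ (hsub hmem)
  | Ann.R φ, Ann.L ψ =>
    have hsub : op (Formula.eval cv φ).1 ⊆ op (Formula.eval cv ψ).1 := hs
    have hmem : Ann.R φ ∈ op (Formula.eval cv φ).1 := fun d hd => (truth φ).2 d hd
    exact CFp.swap (hsub hmem _ (truth ψ).1)

theorem cf_to_full {t : Sequent X} (h : CFp t) : OLProof (∅ : Set (Sequent X)) t := by
  induction h with
  | ax h => exact absurd h (Set.notMem_empty _)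
  | hyp φ => exact OLProof.hyp φ
  | cut Γ Δ φ hC h1 h2 ih1 ih2 => exact absurd hC id
  | replace Γ Δ h ih => exact OLProof.replace Γ Δ ih
  | andL₁ φ ψ Δ h ih => exact OLProof.andL₁ φ ψ Δ ih
  | andL₂ φ ψ Δ h ih => exact OLProof.andL₂ φ ψ Δ ih
  | andR Γ φ ψ h1 h2 ih1 ih2 => exact OLProof.andR Γ φ ψ ih1 ih2
  | orL φ ψ Δ h1 h2 ih1 ih2 => exact OLProof.orL φ ψ Δ ih1 ih2
  | orR₁ Γ φ ψ h ih => exact OLProof.orR₁ Γ φ ψ ih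
  | orR₂ Γ φ ψ h ih => exact OLProof.orR₂ Γ φ ψ ih
  | negL Γ φ h ih => exact OLProof.negL Γ φ ih
  | negR φ Δ h ih => exact OLProof.negR φ Δ ih
  | botL Δ => exact OLProof.botL Δ
  | topR Γ => exact OLProof.topR Γ

end OLCE

/-- Cut elimination for orthologic without axioms: a sequent is
provable iff it has a proof without any instance of the Cut rule. -/
theorem ol_cut_elimination {X : Type} [Countable X] [Infinite X] (t : Sequent X) :
    OLProof (∅ : Set (Sequent X)) t ↔
      OLProofCut (∅ : Set (Sequent X)) (fun _ => False) t := by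
  induction t using Sym2.ind with
  | _ a b =>
    constructor
    · exact OLCE.complete a b
    · exact OLCE.cf_to_full
end

section
/- Subformula property: if a sequent (Γ, Δ) has a proof in the orthologic proof system with non-logical axioms A, then it has a proof in which every formula occurring in any sequent of the proof is a subformula of a formula of Γ, Δ, or of a formula occurring in some sequent of A. -/
/-! ### Auxiliary development for the subformula property -/

namespace OLSub

open Classical

variable {X : Type}

/-- Transitivity of the subformula relation. -/
theorem Subformula.trans' {a b c : Formula X} (h1 : Subformula a b) (h2 : Subformula b c) :
    Subformula a c := by
  induction h2 with
  | refl => exact h1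
  | and_left _ ih => exact Subformula.and_left ih
  | and_right _ ih => exact Subformula.and_right ih
  | or_left _ ih => exact Subformula.or_left ih
  | or_right _ ih => exact Subformula.or_right ih
  | not_sub _ ih => exact Subformula.not_sub ih

/-- A formula occurring (exactly) in some axiom of `A`. -/
def CutOK (A : Set (Sequent X)) (φ : Formula X) : Prop :=
  ∃ w ∈ A, ∃ b ∈ w, Ann.fml b = φ

/-- "Wide" sequents: unordered pairs of optional annotated formulas, representing
sets of at most two annotated formulas. -/
abbrev OSeq (X : Type) := Sym2 (Option (Ann X))

abbrev la (φ : Formula X) : Option (Ann X) := some (Ann.L φ)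
abbrev ra (φ : Formula X) : Option (Ann X) := some (Ann.R φ)

/-- Embedding of sequents into wide sequents, collapsing diagonal pairs to singletons. -/
noncomputable def emb (t : Sequent X) : OSeq X :=
  Sym2.lift ⟨fun a b => if a = b then s(some a, none) else s(some a, some b), by
    intro a b
    dsimp only
    by_cases h : a = b
    · subst h; simp
    · rw [if_neg h, if_neg (Ne.symm h), Sym2.eq_swap]⟩ t

theorem emb_mk (a b : Ann X) :
    emb s(a, b) = if a = b then s(some a, none) else s(some a, some b) := by
  simp [emb]

theorem emb_eq_pair {u : Sequent X} {a b : Ann X}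
    (h : emb u = s(some a, some b)) : u = s(a, b) := by
  induction u using Sym2.inductionOn with
  | hf x y =>
    rw [emb_mk] at h
    split_ifs at h with hd
    · rw [Sym2.eq_iff] at h; simp at h
    · rw [Sym2.eq_iff] at h
      rcases h with ⟨h1, h2⟩ | ⟨h1, h2⟩ <;> simp_all [Sym2.eq_iff]

theorem emb_eq_single {u : Sequent X} {a : Ann X}
    (h : emb u = s(some a, none)) : u = s(a, a) := by
  induction u using Sym2.inductionOn with
  | hf x y =>
    rw [emb_mk] at h
    split_ifs at h with hd
    · subst hd; rw [Sym2.eq_iff] at h; simp at h; simp [h]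
    · rw [Sym2.eq_iff] at h; simp at h

theorem emb_mem {u : Sequent X} {a : Ann X} {z : Option (Ann X)}
    (h : emb u = s(some a, z)) : a ∈ u := by
  cases z with
  | none => rw [emb_eq_single h]; simp
  | some b => rw [emb_eq_pair h]; simp

theorem emb_ne_some_diag {u : Sequent X} {a : Ann X} :
    emb u ≠ s(some a, some a) := by
  induction u using Sym2.inductionOn with
  | hf x y =>
    rw [emb_mk]
    split_ifs with hd
    · intro h; rw [Sym2.eq_iff] at h; simp at h
    · intro h; rw [Sym2.eq_iff] at h
      rcases h with ⟨h1, h2⟩ | ⟨h1, h2⟩ <;> simp_all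

theorem emb_ne_empty {u : Sequent X} :
    emb u ≠ s(none, none) := by
  induction u using Sym2.inductionOn with
  | hf x y =>
    rw [emb_mk]
    split_ifs with hd <;> · intro h; rw [Sym2.eq_iff] at h; simp at h

/-- The wide orthologic proof system with heights; cut formulas are restricted to
formulas occurring in `A`. -/
inductive W (A : Set (Sequent X)) : Nat → OSeq X → Prop
  | ax {n t u} : u ∈ A → t = emb u → W A (n+1) t
  | hyp {n t} (φ : Formula X) : t = s(la φ, ra φ) → W A (n+1) t
  | cut {n t} (Γ Δ : Option (Ann X)) (φ : Formula X) : CutOK A φ →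
      W A n s(Γ, ra φ) → W A n s(la φ, Δ) → t = s(Γ, Δ) → W A (n+1) t
  | wk {n t} (Γ Δ : Option (Ann X)) : W A n s(Γ, none) → t = s(Γ, Δ) → W A (n+1) t
  | ctr {n t} (a : Ann X) : W A n s(some a, some a) → t = s(some a, none) → W A (n+1) t
  | andL₁ {n t} (φ ψ : Formula X) (Δ : Option (Ann X)) :
      W A n s(la φ, Δ) → t = s(la (φ.and ψ), Δ) → W A (n+1) t
  | andL₂ {n t} (φ ψ : Formula X) (Δ : Option (Ann X)) :
      W A n s(la ψ, Δ) → t = s(la (φ.and ψ), Δ) → W A (n+1) t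
  | andR {n t} (Γ : Option (Ann X)) (φ ψ : Formula X) :
      W A n s(Γ, ra φ) → W A n s(Γ, ra ψ) → t = s(Γ, ra (φ.and ψ)) → W A (n+1) t
  | orL {n t} (φ ψ : Formula X) (Δ : Option (Ann X)) :
      W A n s(la φ, Δ) → W A n s(la ψ, Δ) → t = s(la (φ.or ψ), Δ) → W A (n+1) t
  | orR₁ {n t} (Γ : Option (Ann X)) (φ ψ : Formula X) :
      W A n s(Γ, ra φ) → t = s(Γ, ra (φ.or ψ)) → W A (n+1) t
  | orR₂ {n t} (Γ : Option (Ann X)) (φ ψ : Formula X) :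
      W A n s(Γ, ra ψ) → t = s(Γ, ra (φ.or ψ)) → W A (n+1) t
  | negL {n t} (Γ : Option (Ann X)) (φ : Formula X) :
      W A n s(Γ, ra φ) → t = s(Γ, la φ.not) → W A (n+1) t
  | negR {n t} (φ : Formula X) (Δ : Option (Ann X)) :
      W A n s(la φ, Δ) → t = s(ra φ.not, Δ) → W A (n+1) t
  | botL {n t} (Δ : Option (Ann X)) : t = s(la Formula.bot, Δ) → W A (n+1) t
  | topR {n t} (Γ : Option (Ann X)) : t = s(Γ, ra Formula.top) → W A (n+1) t

variable {A : Set (Sequent X)}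

theorem W.succ {n t} (h : W A n t) : W A (n+1) t := by
  induction h with
  | ax h e => exact W.ax h e
  | hyp φ e => exact W.hyp φ e
  | cut Γ Δ φ hC _ _ e ih1 ih2 => exact W.cut Γ Δ φ hC ih1 ih2 e
  | wk Γ Δ _ e ih => exact W.wk Γ Δ ih e
  | ctr a _ e ih => exact W.ctr a ih e
  | andL₁ φ ψ Δ _ e ih => exact W.andL₁ φ ψ Δ ih e
  | andL₂ φ ψ Δ _ e ih => exact W.andL₂ φ ψ Δ ih e
  | andR Γ φ ψ _ _ e ih1 ih2 => exact W.andR Γ φ ψ ih1 ih2 e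
  | orL φ ψ Δ _ _ e ih1 ih2 => exact W.orL φ ψ Δ ih1 ih2 e
  | orR₁ Γ φ ψ _ e ih => exact W.orR₁ Γ φ ψ ih e
  | orR₂ Γ φ ψ _ e ih => exact W.orR₂ Γ φ ψ ih e
  | negL Γ φ _ e ih => exact W.negL Γ φ ih e
  | negR φ Δ _ e ih => exact W.negR φ Δ ih e
  | botL Δ e => exact W.botL Δ e
  | topR Γ e => exact W.topR Γ e

theorem W.mono {n m t} (h : W A n t) (hnm : n ≤ m) : W A m t := by
  induction hnm with
  | refl => exact h
  | step _ ih => exact ih.succ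

theorem W.swap {n} {a b : Option (Ann X)} (h : W A n s(a, b)) : W A n s(b, a) := by
  rwa [Sym2.eq_swap]

/-- Existential-level helpers -/
def EW (A : Set (Sequent X)) (t : OSeq X) : Prop := ∃ n, W A n t

theorem EW.cut' {Γ Δ : Option (Ann X)} {φ : Formula X} (hC : CutOK A φ)
    (h1 : EW A s(Γ, ra φ)) (h2 : EW A s(la φ, Δ)) : EW A s(Γ, Δ) := by
  obtain ⟨n1, h1⟩ := h1; obtain ⟨n2, h2⟩ := h2
  exact ⟨_, W.cut Γ Δ φ hC (h1.mono (Nat.le_max_left n1 n2))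
    (h2.mono (Nat.le_max_right n1 n2)) rfl⟩

theorem EW.ctr' {Δ : Option (Ann X)} (h : EW A s(Δ, Δ)) : EW A s(Δ, none) := by
  obtain ⟨n, h⟩ := h
  cases Δ with
  | none => exact ⟨n, h⟩
  | some a => exact ⟨n+1, W.ctr a h rfl⟩

theorem EW.swap' {a b : Option (Ann X)} (h : EW A s(a, b)) : EW A s(b, a) := by
  rwa [Sym2.eq_swap]

theorem EW.wk' {Γ Δ : Option (Ann X)} (h : EW A s(Γ, none)) : EW A s(Γ, Δ) := by
  obtain ⟨n, h⟩ := h; exact ⟨n+1, W.wk Γ Δ h rfl⟩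

theorem EW.andL₁' {φ ψ : Formula X} {Δ : Option (Ann X)} (h : EW A s(la φ, Δ)) :
    EW A s(la (φ.and ψ), Δ) := by
  obtain ⟨n, h⟩ := h; exact ⟨n+1, W.andL₁ φ ψ Δ h rfl⟩

theorem EW.andL₂' {φ ψ : Formula X} {Δ : Option (Ann X)} (h : EW A s(la ψ, Δ)) :
    EW A s(la (φ.and ψ), Δ) := by
  obtain ⟨n, h⟩ := h; exact ⟨n+1, W.andL₂ φ ψ Δ h rfl⟩

theorem EW.andR' {Γ : Option (Ann X)} {φ ψ : Formula X}
    (h1 : EW A s(Γ, ra φ)) (h2 : EW A s(Γ, ra ψ)) : EW A s(Γ, ra (φ.and ψ)) := by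
  obtain ⟨n1, h1⟩ := h1; obtain ⟨n2, h2⟩ := h2
  exact ⟨_, W.andR Γ φ ψ (h1.mono (Nat.le_max_left n1 n2))
    (h2.mono (Nat.le_max_right n1 n2)) rfl⟩

theorem EW.orL' {φ ψ : Formula X} {Δ : Option (Ann X)}
    (h1 : EW A s(la φ, Δ)) (h2 : EW A s(la ψ, Δ)) : EW A s(la (φ.or ψ), Δ) := by
  obtain ⟨n1, h1⟩ := h1; obtain ⟨n2, h2⟩ := h2
  exact ⟨_, W.orL φ ψ Δ (h1.mono (Nat.le_max_left n1 n2))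
    (h2.mono (Nat.le_max_right n1 n2)) rfl⟩

theorem EW.orR₁' {Γ : Option (Ann X)} {φ ψ : Formula X} (h : EW A s(Γ, ra φ)) :
    EW A s(Γ, ra (φ.or ψ)) := by
  obtain ⟨n, h⟩ := h; exact ⟨n+1, W.orR₁ Γ φ ψ h rfl⟩

theorem EW.orR₂' {Γ : Option (Ann X)} {φ ψ : Formula X} (h : EW A s(Γ, ra ψ)) :
    EW A s(Γ, ra (φ.or ψ)) := by
  obtain ⟨n, h⟩ := h; exact ⟨n+1, W.orR₂ Γ φ ψ h rfl⟩

theorem EW.negL' {Γ : Option (Ann X)} {φ : Formula X} (h : EW A s(Γ, ra φ)) :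
    EW A s(Γ, la φ.not) := by
  obtain ⟨n, h⟩ := h; exact ⟨n+1, W.negL Γ φ h rfl⟩

theorem EW.negR' {φ : Formula X} {Δ : Option (Ann X)} (h : EW A s(la φ, Δ)) :
    EW A s(ra φ.not, Δ) := by
  obtain ⟨n, h⟩ := h; exact ⟨n+1, W.negR φ Δ h rfl⟩

theorem EW.botL' (Δ : Option (Ann X)) : EW A s(la (Formula.bot : Formula X), Δ) :=
  ⟨1, W.botL Δ rfl⟩

theorem EW.topR' (Γ : Option (Ann X)) : EW A s(Γ, ra (Formula.top : Formula X)) :=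
  ⟨1, W.topR Γ rfl⟩

/-- Inversion for `⊥` on the right: a wide sequent containing `R ⊥` can be
replaced by anything in that slot. -/
theorem botInv (n : ℕ) :
    (∀ Γ? : Option (Ann X), W A n s(Γ?, ra Formula.bot) → ∀ Δ?, EW A s(Γ?, Δ?)) ∧
    (W A n s(ra (Formula.bot : Formula X), ra (Formula.bot : Formula X)) →
      ∀ Γ? Δ?, EW A s(Γ?, Δ?)) := by
  induction n using Nat.strong_induction_on with
  | _ n IH =>
  constructor
  · intro Γ? D1 Δ?
    have D1' := D1
    cases D1 with
    | ax hu heq =>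
      have hC : CutOK A Formula.bot := by
        refine ⟨_, hu, Ann.R Formula.bot, ?_, rfl⟩
        exact emb_mem (z := Γ?) (by rw [← heq, Sym2.eq_swap])
      exact EW.cut' hC ⟨_, D1'⟩ (EW.botL' Δ?)
    | hyp ψ heq =>
      rcases Sym2.eq_iff.mp heq with ⟨h1, h2⟩ | ⟨h1, h2⟩
      · simp only [ra, la, Option.some.injEq, Ann.R.injEq] at h2
        subst h1; subst h2; exact EW.botL' Δ?
      · simp [ra, la] at h2
    | cut Γc Δc ψ hC p1 p2 heq =>
      rcases Sym2.eq_iff.mp heq with ⟨h1, h2⟩ | ⟨h1, h2⟩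
      · subst h1; rw [← h2] at p2
        exact EW.cut' hC ⟨_, p1⟩ ((IH _ (Nat.lt_succ_self _)).1 _ p2 Δ?)
      · subst h1; rw [← h2] at p1
        have E1 := (IH _ (Nat.lt_succ_self _)).1 _ p1.swap Δ?
        exact (EW.cut' hC E1.swap' ⟨_, p2⟩).swap'
    | wk Γc Δc p heq =>
      rcases Sym2.eq_iff.mp heq with ⟨h1, h2⟩ | ⟨h1, h2⟩
      · subst h1; exact ⟨_, W.wk Γ? Δ? p rfl⟩
      · subst h1
        rw [← h2] at p
        have E := (IH _ (Nat.lt_succ_self _)).1 none p.swap Δ?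
        exact (EW.wk' (Γ := Δ?) (Δ := Γ?) E.swap').swap'
    | ctr a p heq =>
      rcases Sym2.eq_iff.mp heq with ⟨h1, h2⟩ | ⟨h1, h2⟩
      · simp [ra] at h2
      · simp only [ra, Option.some.injEq] at h2
        subst h1
        rw [← h2] at p
        exact (IH _ (Nat.lt_succ_self _)).2 p none Δ?
    | andL₁ α β Δc p heq =>
      rcases Sym2.eq_iff.mp heq with ⟨h1, h2⟩ | ⟨h1, h2⟩
      · subst h1; rw [← h2] at p
        exact EW.andL₁' ((IH _ (Nat.lt_succ_self _)).1 _ p Δ?)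
      · simp [ra, la] at h2
    | andL₂ α β Δc p heq =>
      rcases Sym2.eq_iff.mp heq with ⟨h1, h2⟩ | ⟨h1, h2⟩
      · subst h1; rw [← h2] at p
        exact EW.andL₂' ((IH _ (Nat.lt_succ_self _)).1 _ p Δ?)
      · simp [ra, la] at h2
    | orL α β Δc p1 p2 heq =>
      rcases Sym2.eq_iff.mp heq with ⟨h1, h2⟩ | ⟨h1, h2⟩
      · subst h1; rw [← h2] at p1 p2
        exact EW.orL' ((IH _ (Nat.lt_succ_self _)).1 _ p1 Δ?)
          ((IH _ (Nat.lt_succ_self _)).1 _ p2 Δ?)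
      · simp [ra, la] at h2
    | andR Γc α β p1 p2 heq =>
      rcases Sym2.eq_iff.mp heq with ⟨h1, h2⟩ | ⟨h1, h2⟩
      · simp [ra] at h2
      · subst h1; rw [← h2] at p1 p2
        have E1 := (IH _ (Nat.lt_succ_self _)).1 _ p1.swap Δ?
        have E2 := (IH _ (Nat.lt_succ_self _)).1 _ p2.swap Δ?
        exact (EW.andR' E1.swap' E2.swap').swap'
    | orR₁ Γc α β p heq =>
      rcases Sym2.eq_iff.mp heq with ⟨h1, h2⟩ | ⟨h1, h2⟩
      · simp [ra] at h2
      · subst h1; rw [← h2] at p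
        have E := (IH _ (Nat.lt_succ_self _)).1 _ p.swap Δ?
        exact (EW.orR₁' E.swap').swap'
    | orR₂ Γc α β p heq =>
      rcases Sym2.eq_iff.mp heq with ⟨h1, h2⟩ | ⟨h1, h2⟩
      · simp [ra] at h2
      · subst h1; rw [← h2] at p
        have E := (IH _ (Nat.lt_succ_self _)).1 _ p.swap Δ?
        exact (EW.orR₂' E.swap').swap'
    | negL Γc α p heq =>
      rcases Sym2.eq_iff.mp heq with ⟨h1, h2⟩ | ⟨h1, h2⟩
      · simp [ra, la] at h2
      · subst h1; rw [← h2] at p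
        have E := (IH _ (Nat.lt_succ_self _)).1 _ p.swap Δ?
        exact (EW.negL' E.swap').swap'
    | negR α Δc p heq =>
      rcases Sym2.eq_iff.mp heq with ⟨h1, h2⟩ | ⟨h1, h2⟩
      · rw [← h2] at p
        subst h1
        exact EW.negR' ((IH _ (Nat.lt_succ_self _)).1 _ p Δ?)
      · simp [ra] at h2
    | botL Δc heq =>
      rcases Sym2.eq_iff.mp heq with ⟨h1, h2⟩ | ⟨h1, h2⟩
      · subst h1; exact EW.botL' Δ?
      · simp [ra, la] at h2
    | topR Γc heq =>
      rcases Sym2.eq_iff.mp heq with ⟨h1, h2⟩ | ⟨h1, h2⟩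
      · simp [ra] at h2
      · subst h1; exact (EW.topR' Δ?).swap'
  · intro D2 Γ? Δ?
    cases D2 with
    | ax hu heq => exact absurd heq.symm emb_ne_some_diag
    | hyp ψ heq =>
      rcases Sym2.eq_iff.mp heq with ⟨h1, h2⟩ | ⟨h1, h2⟩
      · simp [ra, la] at h1
      · simp [ra, la] at h2
    | cut Γc Δc ψ hC p1 p2 heq =>
      have key : Γc = ra Formula.bot → Δc = ra Formula.bot → EW A s(Γ?, Δ?) := by
        intro e1 e2
        have p1' := p1; have p2' := p2
        rw [e1] at p1'; rw [e2] at p2'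
        have E1 := (IH _ (Nat.lt_succ_self _)).1 _ p1'.swap Γ?
        have E2 := (IH _ (Nat.lt_succ_self _)).1 _ p2' Δ?
        exact EW.cut' hC E1.swap' E2
      rcases Sym2.eq_iff.mp heq with ⟨h1, h2⟩ | ⟨h1, h2⟩
      · exact key h1.symm h2.symm
      · exact key h2.symm h1.symm
    | wk Γc Δc p heq =>
      have key : Γc = ra Formula.bot → EW A s(Γ?, Δ?) := by
        intro e1
        have p' := p
        rw [e1] at p'
        have E := (IH _ (Nat.lt_succ_self _)).1 none p'.swap Δ?
        exact (EW.wk' (Γ := Δ?) (Δ := Γ?) E.swap').swap'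
      rcases Sym2.eq_iff.mp heq with ⟨h1, h2⟩ | ⟨h1, h2⟩
      · exact key h1.symm
      · exact key h2.symm
    | ctr a p heq =>
      rcases Sym2.eq_iff.mp heq with ⟨h1, h2⟩ | ⟨h1, h2⟩
      · simp [ra] at h2
      · simp [ra] at h1
    | andL₁ α β Δc p heq =>
      rcases Sym2.eq_iff.mp heq with ⟨h1, h2⟩ | ⟨h1, h2⟩
      · simp [ra, la] at h1
      · simp [ra, la] at h2
    | andL₂ α β Δc p heq =>
      rcases Sym2.eq_iff.mp heq with ⟨h1, h2⟩ | ⟨h1, h2⟩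
      · simp [ra, la] at h1
      · simp [ra, la] at h2
    | orL α β Δc p1 p2 heq =>
      rcases Sym2.eq_iff.mp heq with ⟨h1, h2⟩ | ⟨h1, h2⟩
      · simp [ra, la] at h1
      · simp [ra, la] at h2
    | andR Γc α β p1 p2 heq =>
      rcases Sym2.eq_iff.mp heq with ⟨h1, h2⟩ | ⟨h1, h2⟩
      · simp [ra] at h2
      · simp [ra] at h1
    | orR₁ Γc α β p heq =>
      rcases Sym2.eq_iff.mp heq with ⟨h1, h2⟩ | ⟨h1, h2⟩
      · simp [ra] at h2
      · simp [ra] at h1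
    | orR₂ Γc α β p heq =>
      rcases Sym2.eq_iff.mp heq with ⟨h1, h2⟩ | ⟨h1, h2⟩
      · simp [ra] at h2
      · simp [ra] at h1
    | negL Γc α p heq =>
      rcases Sym2.eq_iff.mp heq with ⟨h1, h2⟩ | ⟨h1, h2⟩
      · simp [ra, la] at h2
      · simp [ra, la] at h1
    | negR α Δc p heq =>
      rcases Sym2.eq_iff.mp heq with ⟨h1, h2⟩ | ⟨h1, h2⟩
      · simp [ra] at h1
      · simp [ra] at h2
    | botL Δc heq =>
      rcases Sym2.eq_iff.mp heq with ⟨h1, h2⟩ | ⟨h1, h2⟩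
      · simp [ra, la] at h1
      · simp [ra, la] at h2
    | topR Γc heq =>
      rcases Sym2.eq_iff.mp heq with ⟨h1, h2⟩ | ⟨h1, h2⟩
      · simp [ra] at h2
      · simp [ra] at h1

/-- Data extracted from a principal left-rule for `φ`. -/
def LInv (A : Set (Sequent X)) (φ : Formula X) (Δ' : Option (Ann X)) : Prop :=
  match φ with
  | .and α β => EW A s(la α, Δ') ∨ EW A s(la β, Δ')
  | .or α β => EW A s(la α, Δ') ∧ EW A s(la β, Δ')
  | .not α => EW A s(Δ', ra α)
  | _ => False

theorem LInv_and {α β : Formula X} {Δ' : Option (Ann X)} :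
    LInv A (α.and β) Δ' = (EW A s(la α, Δ') ∨ EW A s(la β, Δ')) := rfl
theorem LInv_or {α β : Formula X} {Δ' : Option (Ann X)} :
    LInv A (α.or β) Δ' = (EW A s(la α, Δ') ∧ EW A s(la β, Δ')) := rfl
theorem LInv_not {α : Formula X} {Δ' : Option (Ann X)} :
    LInv A α.not Δ' = EW A s(Δ', ra α) := rfl

/-- Main right-analysis step of cut elimination: given the left premise (abstractly)
and handlers, analyze the right premise. -/
theorem MR (φ : Formula X) (m : ℕ) (Γ? Δ? : Option (Ann X))
    (HD1 : EW A s(Γ?, ra φ))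
    (KIH : ∀ m' (Δ'' : Option (Ann X)), m' < m →
      (W A m' s(la φ, Δ'') ∨ (Δ'' = none ∧ W A m' s(la φ, la φ))) → EW A s(Γ?, Δ''))
    (HP : ∀ Δ', (Δ' = Δ? ∨ (Δ? = none ∧ Δ' = Γ?)) → LInv A φ Δ' → EW A s(Γ?, Δ'))
    (hR : W A m s(la φ, Δ?) ∨ (Δ? = none ∧ W A m s(la φ, la φ))) :
    EW A s(Γ?, Δ?) := by
  rcases hR with D2 | ⟨hΔ, D2⟩
  · -- ordinary right premise
    have D2' := D2
    cases D2 with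
    | ax hu heq =>
      have hC : CutOK A φ := ⟨_, hu, Ann.L φ, emb_mem (z := Δ?) heq.symm, rfl⟩
      exact EW.cut' hC HD1 ⟨_, D2'⟩
    | hyp ψ heq =>
      rcases Sym2.eq_iff.mp heq with ⟨h1, h2⟩ | ⟨h1, h2⟩
      · simp only [la, Option.some.injEq, Ann.L.injEq] at h1
        subst h1; subst h2; exact HD1
      · simp [la, ra] at h1
    | cut Γc Δc ψ hC p1 p2 heq =>
      rcases Sym2.eq_iff.mp heq with ⟨h1, h2⟩ | ⟨h1, h2⟩
      · rw [← h1] at p1; rw [← h2] at p2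
        have E := KIH _ (ra ψ) (Nat.lt_succ_self _) (Or.inl p1)
        exact EW.cut' hC E ⟨_, p2⟩
      · rw [← h1] at p2; rw [← h2] at p1
        have E := KIH _ (la ψ) (Nat.lt_succ_self _) (Or.inl p2.swap)
        exact (EW.cut' hC ⟨_, p1⟩ E.swap').swap'
    | wk Γc Δc p heq =>
      rcases Sym2.eq_iff.mp heq with ⟨h1, h2⟩ | ⟨h1, h2⟩
      · rw [← h1] at p
        exact EW.wk' (KIH _ none (Nat.lt_succ_self _) (Or.inl p))
      · rw [← h2] at p
        exact (EW.wk' (Δ := Γ?) ⟨_, p⟩).swap'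
    | ctr a p heq =>
      rcases Sym2.eq_iff.mp heq with ⟨h1, h2⟩ | ⟨h1, h2⟩
      · rw [← h1] at p
        subst h2
        exact KIH _ none (Nat.lt_succ_self _) (Or.inr ⟨rfl, p⟩)
      · simp [la] at h1
    | andL₁ α β Δc p heq =>
      rcases Sym2.eq_iff.mp heq with ⟨h1, h2⟩ | ⟨h1, h2⟩
      · simp only [la, Option.some.injEq, Ann.L.injEq] at h1
        subst h1; subst h2
        exact HP _ (Or.inl rfl) (LInv_and ▸ Or.inl ⟨_, p⟩)
      · rw [← h1] at p
        subst h2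
        exact (EW.andL₁' (KIH _ (la α) (Nat.lt_succ_self _) (Or.inl p.swap)).swap').swap'
    | andL₂ α β Δc p heq =>
      rcases Sym2.eq_iff.mp heq with ⟨h1, h2⟩ | ⟨h1, h2⟩
      · simp only [la, Option.some.injEq, Ann.L.injEq] at h1
        subst h1; subst h2
        exact HP _ (Or.inl rfl) (LInv_and ▸ Or.inr ⟨_, p⟩)
      · rw [← h1] at p
        subst h2
        exact (EW.andL₂' (KIH _ (la β) (Nat.lt_succ_self _) (Or.inl p.swap)).swap').swap'
    | orL α β Δc p1 p2 heq =>
      rcases Sym2.eq_iff.mp heq with ⟨h1, h2⟩ | ⟨h1, h2⟩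
      · simp only [la, Option.some.injEq, Ann.L.injEq] at h1
        subst h1; subst h2
        exact HP _ (Or.inl rfl) (LInv_or ▸ ⟨⟨_, p1⟩, ⟨_, p2⟩⟩)
      · rw [← h1] at p1 p2
        subst h2
        exact (EW.orL' (KIH _ (la α) (Nat.lt_succ_self _) (Or.inl p1.swap)).swap'
          (KIH _ (la β) (Nat.lt_succ_self _) (Or.inl p2.swap)).swap').swap'
    | andR Γc α β p1 p2 heq =>
      rcases Sym2.eq_iff.mp heq with ⟨h1, h2⟩ | ⟨h1, h2⟩
      · rw [← h1] at p1 p2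
        subst h2
        exact EW.andR' (KIH _ (ra α) (Nat.lt_succ_self _) (Or.inl p1))
          (KIH _ (ra β) (Nat.lt_succ_self _) (Or.inl p2))
      · simp [la, ra] at h1
    | orR₁ Γc α β p heq =>
      rcases Sym2.eq_iff.mp heq with ⟨h1, h2⟩ | ⟨h1, h2⟩
      · rw [← h1] at p
        subst h2
        exact EW.orR₁' (KIH _ (ra α) (Nat.lt_succ_self _) (Or.inl p))
      · simp [la, ra] at h1
    | orR₂ Γc α β p heq =>
      rcases Sym2.eq_iff.mp heq with ⟨h1, h2⟩ | ⟨h1, h2⟩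
      · rw [← h1] at p
        subst h2
        exact EW.orR₂' (KIH _ (ra β) (Nat.lt_succ_self _) (Or.inl p))
      · simp [la, ra] at h1
    | negL Γc α p heq =>
      rcases Sym2.eq_iff.mp heq with ⟨h1, h2⟩ | ⟨h1, h2⟩
      · rw [← h1] at p
        subst h2
        exact EW.negL' (KIH _ (ra α) (Nat.lt_succ_self _) (Or.inl p))
      · simp only [la, Option.some.injEq, Ann.L.injEq] at h1
        subst h1
        rw [← h2] at p
        exact HP _ (Or.inl rfl) (LInv_not ▸ (⟨_, p⟩ : EW A s(Δ?, ra α)))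
    | negR α Δc p heq =>
      rcases Sym2.eq_iff.mp heq with ⟨h1, h2⟩ | ⟨h1, h2⟩
      · simp [la, ra] at h1
      · rw [← h1] at p
        subst h2
        exact (EW.negR' (KIH _ (la α) (Nat.lt_succ_self _) (Or.inl p.swap)).swap').swap'
    | botL Δc heq =>
      rcases Sym2.eq_iff.mp heq with ⟨h1, h2⟩ | ⟨h1, h2⟩
      · simp only [la, Option.some.injEq, Ann.L.injEq] at h1
        subst h1; subst h2
        obtain ⟨k, hk⟩ := HD1
        exact (botInv k).1 Γ? hk Δ?
      · subst h2
        exact (EW.botL' Γ?).swap'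
    | topR Γc heq =>
      rcases Sym2.eq_iff.mp heq with ⟨h1, h2⟩ | ⟨h1, h2⟩
      · subst h2; exact EW.topR' Γ?
      · simp [la, ra] at h1
  · -- doubled right premise
    subst hΔ
    cases D2 with
    | ax hu heq => exact absurd heq.symm emb_ne_some_diag
    | hyp ψ heq =>
      rcases Sym2.eq_iff.mp heq with ⟨h1, h2⟩ | ⟨h1, h2⟩
      · simp [la, ra] at h2
      · simp [la, ra] at h1
    | cut Γc Δc ψ hC p1 p2 heq =>
      have key : Γc = la φ → Δc = la φ → EW A s(Γ?, none) := by
        intro e1 e2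
        have p1' := p1; have p2' := p2
        rw [e1] at p1'; rw [e2] at p2'
        have E1 := KIH _ (ra ψ) (Nat.lt_succ_self _) (Or.inl p1')
        have E2 := KIH _ (la ψ) (Nat.lt_succ_self _) (Or.inl p2'.swap)
        exact EW.ctr' (EW.cut' hC E1 E2.swap')
      rcases Sym2.eq_iff.mp heq with ⟨h1, h2⟩ | ⟨h1, h2⟩
      · exact key h1.symm h2.symm
      · exact key h2.symm h1.symm
    | wk Γc Δc p heq =>
      have key : Γc = la φ → EW A s(Γ?, none) := by
        intro e1
        have p' := p; rw [e1] at p'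
        exact KIH _ none (Nat.lt_succ_self _) (Or.inl p')
      rcases Sym2.eq_iff.mp heq with ⟨h1, h2⟩ | ⟨h1, h2⟩
      · exact key h1.symm
      · exact key h2.symm
    | ctr a p heq =>
      rcases Sym2.eq_iff.mp heq with ⟨h1, h2⟩ | ⟨h1, h2⟩
      · simp [la] at h2
      · simp [la] at h1
    | andL₁ α β Δc p heq =>
      have key : la φ = la (α.and β) → Δc = la φ → EW A s(Γ?, none) := by
        intro e1 e2
        simp only [la, Option.some.injEq, Ann.L.injEq] at e1
        subst e1
        have p' := p; rw [e2] at p'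
        have E := KIH _ (la α) (Nat.lt_succ_self _) (Or.inl p'.swap)
        exact EW.ctr' (HP _ (Or.inr ⟨rfl, rfl⟩) (LInv_and ▸ Or.inl E.swap'))
      rcases Sym2.eq_iff.mp heq with ⟨h1, h2⟩ | ⟨h1, h2⟩
      · exact key h1 h2.symm
      · exact key h2 h1.symm
    | andL₂ α β Δc p heq =>
      have key : la φ = la (α.and β) → Δc = la φ → EW A s(Γ?, none) := by
        intro e1 e2
        simp only [la, Option.some.injEq, Ann.L.injEq] at e1
        subst e1
        have p' := p; rw [e2] at p'
        have E := KIH _ (la β) (Nat.lt_succ_self _) (Or.inl p'.swap)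
        exact EW.ctr' (HP _ (Or.inr ⟨rfl, rfl⟩) (LInv_and ▸ Or.inr E.swap'))
      rcases Sym2.eq_iff.mp heq with ⟨h1, h2⟩ | ⟨h1, h2⟩
      · exact key h1 h2.symm
      · exact key h2 h1.symm
    | orL α β Δc p1 p2 heq =>
      have key : la φ = la (α.or β) → Δc = la φ → EW A s(Γ?, none) := by
        intro e1 e2
        simp only [la, Option.some.injEq, Ann.L.injEq] at e1
        subst e1
        have p1' := p1; have p2' := p2
        rw [e2] at p1' p2'
        have E1 := KIH _ (la α) (Nat.lt_succ_self _) (Or.inl p1'.swap)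
        have E2 := KIH _ (la β) (Nat.lt_succ_self _) (Or.inl p2'.swap)
        exact EW.ctr' (HP _ (Or.inr ⟨rfl, rfl⟩) (LInv_or ▸ ⟨E1.swap', E2.swap'⟩))
      rcases Sym2.eq_iff.mp heq with ⟨h1, h2⟩ | ⟨h1, h2⟩
      · exact key h1 h2.symm
      · exact key h2 h1.symm
    | negL Γc α p heq =>
      have key : la φ = la α.not → Γc = la φ → EW A s(Γ?, none) := by
        intro e1 e2
        simp only [la, Option.some.injEq, Ann.L.injEq] at e1
        subst e1
        have p' := p; rw [e2] at p'
        have E := KIH _ (ra α) (Nat.lt_succ_self _) (Or.inl p')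
        exact EW.ctr' (HP _ (Or.inr ⟨rfl, rfl⟩) (LInv_not ▸ E))
      rcases Sym2.eq_iff.mp heq with ⟨h1, h2⟩ | ⟨h1, h2⟩
      · exact key h2 h1.symm
      · exact key h1 h2.symm
    | negR α Δc p heq =>
      rcases Sym2.eq_iff.mp heq with ⟨h1, h2⟩ | ⟨h1, h2⟩
      · simp [la, ra] at h1
      · simp [la, ra] at h2
    | botL Δc heq =>
      have key : la φ = la Formula.bot → EW A s(Γ?, none) := by
        intro e1
        simp only [la, Option.some.injEq, Ann.L.injEq] at e1
        subst e1
        obtain ⟨k, hk⟩ := HD1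
        exact (botInv k).1 Γ? hk none
      rcases Sym2.eq_iff.mp heq with ⟨h1, h2⟩ | ⟨h1, h2⟩
      · exact key h1
      · exact key h2
    | topR Γc heq =>
      rcases Sym2.eq_iff.mp heq with ⟨h1, h2⟩ | ⟨h1, h2⟩
      · simp [la, ra] at h2
      · simp [la, ra] at h1
    | andR Γc α β p1 p2 heq =>
      rcases Sym2.eq_iff.mp heq with ⟨h1, h2⟩ | ⟨h1, h2⟩
      · simp [la, ra] at h2
      · simp [la, ra] at h1
    | orR₁ Γc α β p heq =>
      rcases Sym2.eq_iff.mp heq with ⟨h1, h2⟩ | ⟨h1, h2⟩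
      · simp [la, ra] at h2
      · simp [la, ra] at h1
    | orR₂ Γc α β p heq =>
      rcases Sym2.eq_iff.mp heq with ⟨h1, h2⟩ | ⟨h1, h2⟩
      · simp [la, ra] at h2
      · simp [la, ra] at h1

theorem LInv_top {Δ' : Option (Ann X)} :
    LInv A (Formula.top : Formula X) Δ' = False := rfl

theorem cutWithR {φ : Formula X} {m : ℕ} {Γ? Δ? : Option (Ann X)} (hC : CutOK A φ)
    (hD : EW A s(Γ?, ra φ))
    (hR : W A m s(la φ, Δ?) ∨ (Δ? = none ∧ W A m s(la φ, la φ))) : EW A s(Γ?, Δ?) := by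
  rcases hR with D2 | ⟨hΔ, D2⟩
  · exact EW.cut' hC hD ⟨_, D2⟩
  · subst hΔ; exact EW.cut' hC hD ⟨_, W.ctr _ D2 rfl⟩

theorem hypRight {φ : Formula X} {m : ℕ} {Δ? : Option (Ann X)}
    (hR : W A m s(la φ, Δ?) ∨ (Δ? = none ∧ W A m s(la φ, la φ))) : EW A s(la φ, Δ?) := by
  rcases hR with D2 | ⟨hΔ, D2⟩
  · exact ⟨_, D2⟩
  · subst hΔ; exact ⟨_, W.ctr _ D2 rfl⟩

/-- Cut elimination for the wide system. -/
theorem CE (φ : Formula X) (n m : ℕ) (Γ? Δ? : Option (Ann X))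
    (hL : W A n s(Γ?, ra φ) ∨ (Γ? = none ∧ W A n s(ra φ, ra φ)))
    (hR : W A m s(la φ, Δ?) ∨ (Δ? = none ∧ W A m s(la φ, la φ))) :
    EW A s(Γ?, Δ?) := by
  rcases hL with D1 | ⟨hΓ, D1⟩
  · -- ordinary left premise
    have D1' := D1
    cases D1 with
    | ax hu heq =>
      have hC : CutOK A φ :=
        ⟨_, hu, Ann.R φ, emb_mem (z := Γ?) (by rw [← heq, Sym2.eq_swap]), rfl⟩
      exact cutWithR hC ⟨_, D1'⟩ hR
    | hyp ψ heq =>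
      rcases Sym2.eq_iff.mp heq with ⟨h1, h2⟩ | ⟨h1, h2⟩
      · simp only [ra, Option.some.injEq, Ann.R.injEq] at h2
        subst h2; subst h1
        exact hypRight hR
      · simp [la, ra] at h2
    | cut Γc Δc ψ hC p1 p2 heq =>
      rcases Sym2.eq_iff.mp heq with ⟨h1, h2⟩ | ⟨h1, h2⟩
      · subst h1; rw [← h2] at p2
        have E := CE φ _ m (la ψ) Δ? (Or.inl p2) hR
        exact EW.cut' hC ⟨_, p1⟩ E
      · subst h1; rw [← h2] at p1
        have E := CE φ _ m (ra ψ) Δ? (Or.inl p1.swap) hR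
        exact (EW.cut' hC E.swap' ⟨_, p2⟩).swap'
    | wk Γc Δc p heq =>
      rcases Sym2.eq_iff.mp heq with ⟨h1, h2⟩ | ⟨h1, h2⟩
      · subst h1; exact EW.wk' ⟨_, p⟩
      · subst h1; rw [← h2] at p
        have E := CE φ _ m none Δ? (Or.inl p.swap) hR
        exact (EW.wk' E.swap').swap'
    | ctr a p heq =>
      rcases Sym2.eq_iff.mp heq with ⟨h1, h2⟩ | ⟨h1, h2⟩
      · simp [ra] at h2
      · simp only [ra, Option.some.injEq] at h2
        subst h1; rw [← h2] at p
        exact CE φ _ m none Δ? (Or.inr ⟨rfl, p⟩) hR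
    | andL₁ α β Δc p heq =>
      rcases Sym2.eq_iff.mp heq with ⟨h1, h2⟩ | ⟨h1, h2⟩
      · subst h1; rw [← h2] at p
        exact EW.andL₁' (CE φ _ m (la α) Δ? (Or.inl p) hR)
      · simp [la, ra] at h2
    | andL₂ α β Δc p heq =>
      rcases Sym2.eq_iff.mp heq with ⟨h1, h2⟩ | ⟨h1, h2⟩
      · subst h1; rw [← h2] at p
        exact EW.andL₂' (CE φ _ m (la β) Δ? (Or.inl p) hR)
      · simp [la, ra] at h2
    | orL α β Δc p1 p2 heq =>
      rcases Sym2.eq_iff.mp heq with ⟨h1, h2⟩ | ⟨h1, h2⟩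
      · subst h1; rw [← h2] at p1 p2
        exact EW.orL' (CE φ _ m (la α) Δ? (Or.inl p1) hR)
          (CE φ _ m (la β) Δ? (Or.inl p2) hR)
      · simp [la, ra] at h2
    | negL Γc α p heq =>
      rcases Sym2.eq_iff.mp heq with ⟨h1, h2⟩ | ⟨h1, h2⟩
      · simp [la, ra] at h2
      · subst h1; rw [← h2] at p
        have E := CE φ _ m (ra α) Δ? (Or.inl p.swap) hR
        exact (EW.negL' E.swap').swap'
    | botL Δc heq =>
      rcases Sym2.eq_iff.mp heq with ⟨h1, h2⟩ | ⟨h1, h2⟩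
      · subst h1; exact EW.botL' Δ?
      · simp [la, ra] at h2
    | topR Γc heq =>
      rcases Sym2.eq_iff.mp heq with ⟨h1, h2⟩ | ⟨h1, h2⟩
      · subst h1
        simp only [ra, Option.some.injEq, Ann.R.injEq] at h2
        subst h2
        refine MR Formula.top m Γ? Δ? ⟨_, D1'⟩
          (fun m' Δ'' hm' hr => CE Formula.top _ m' Γ? Δ'' (Or.inl D1') hr)
          (fun Δ' _ inv => ?_) hR
        rw [LInv_top] at inv
        exact inv.elim
      · subst h1
        exact (EW.topR' Δ?).swap'
    | andR Γc α β p1 p2 heq =>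
      rcases Sym2.eq_iff.mp heq with ⟨h1, h2⟩ | ⟨h1, h2⟩
      · subst h1
        simp only [ra, Option.some.injEq, Ann.R.injEq] at h2
        subst h2
        refine MR (α.and β) m Γ? Δ? ⟨_, D1'⟩
          (fun m' Δ'' hm' hr => CE (α.and β) _ m' Γ? Δ'' (Or.inl D1') hr)
          (fun Δ' _ inv => ?_) hR
        rw [LInv_and] at inv
        rcases inv with ⟨k, q⟩ | ⟨k, q⟩
        · exact CE α _ k Γ? Δ' (Or.inl p1) (Or.inl q)
        · exact CE β _ k Γ? Δ' (Or.inl p2) (Or.inl q)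
      · subst h1; rw [← h2] at p1 p2
        have E1 := CE φ _ m (ra α) Δ? (Or.inl p1.swap) hR
        have E2 := CE φ _ m (ra β) Δ? (Or.inl p2.swap) hR
        exact (EW.andR' E1.swap' E2.swap').swap'
    | orR₁ Γc α β p heq =>
      rcases Sym2.eq_iff.mp heq with ⟨h1, h2⟩ | ⟨h1, h2⟩
      · subst h1
        simp only [ra, Option.some.injEq, Ann.R.injEq] at h2
        subst h2
        refine MR (α.or β) m Γ? Δ? ⟨_, D1'⟩
          (fun m' Δ'' hm' hr => CE (α.or β) _ m' Γ? Δ'' (Or.inl D1') hr)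
          (fun Δ' _ inv => ?_) hR
        rw [LInv_or] at inv
        obtain ⟨⟨k, q⟩, -⟩ := inv
        exact CE α _ k Γ? Δ' (Or.inl p) (Or.inl q)
      · subst h1; rw [← h2] at p
        have E := CE φ _ m (ra α) Δ? (Or.inl p.swap) hR
        exact (EW.orR₁' E.swap').swap'
    | orR₂ Γc α β p heq =>
      rcases Sym2.eq_iff.mp heq with ⟨h1, h2⟩ | ⟨h1, h2⟩
      · subst h1
        simp only [ra, Option.some.injEq, Ann.R.injEq] at h2
        subst h2
        refine MR (α.or β) m Γ? Δ? ⟨_, D1'⟩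
          (fun m' Δ'' hm' hr => CE (α.or β) _ m' Γ? Δ'' (Or.inl D1') hr)
          (fun Δ' _ inv => ?_) hR
        rw [LInv_or] at inv
        obtain ⟨-, ⟨k, q⟩⟩ := inv
        exact CE β _ k Γ? Δ' (Or.inl p) (Or.inl q)
      · subst h1; rw [← h2] at p
        have E := CE φ _ m (ra β) Δ? (Or.inl p.swap) hR
        exact (EW.orR₂' E.swap').swap'
    | negR α Δc p heq =>
      rcases Sym2.eq_iff.mp heq with ⟨h1, h2⟩ | ⟨h1, h2⟩
      · subst h1; rw [← h2] at p
        exact EW.negR' (CE φ _ m (la α) Δ? (Or.inl p) hR)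
      · simp only [ra, Option.some.injEq, Ann.R.injEq] at h2
        subst h2
        rw [← h1] at p
        refine MR α.not m Γ? Δ? ⟨_, D1'⟩
          (fun m' Δ'' hm' hr => CE α.not _ m' Γ? Δ'' (Or.inl D1') hr)
          (fun Δ' _ inv => ?_) hR
        rw [LInv_not] at inv
        obtain ⟨k, q⟩ := inv
        exact (CE α k _ Δ' Γ? (Or.inl q) (Or.inl p)).swap'
  · -- doubled left premise
    subst hΓ
    have D1' := D1
    have HD1 : EW A s((none : Option (Ann X)), ra φ) :=
      EW.swap' (⟨_, W.ctr (Ann.R φ) D1' rfl⟩ : EW A s(ra φ, none))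
    cases D1 with
    | ax hu heq => exact absurd heq.symm emb_ne_some_diag
    | hyp ψ heq =>
      rcases Sym2.eq_iff.mp heq with ⟨h1, h2⟩ | ⟨h1, h2⟩
      · simp [la, ra] at h1
      · simp [la, ra] at h2
    | cut Γc Δc ψ hC p1 p2 heq =>
      have key : Γc = ra φ → Δc = ra φ → EW A s((none : Option (Ann X)), Δ?) := by
        intro e1 e2
        have p1' := p1; have p2' := p2
        rw [e1] at p1'; rw [e2] at p2'
        have E1 := CE φ _ m (ra ψ) Δ? (Or.inl p1'.swap) hR
        have E2 := CE φ _ m (la ψ) Δ? (Or.inl p2') hR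
        exact (EW.ctr' (EW.cut' hC E1.swap' E2)).swap'
      rcases Sym2.eq_iff.mp heq with ⟨h1, h2⟩ | ⟨h1, h2⟩
      · exact key h1.symm h2.symm
      · exact key h2.symm h1.symm
    | wk Γc Δc p heq =>
      have key : Γc = ra φ → EW A s((none : Option (Ann X)), Δ?) := by
        intro e1
        have p' := p; rw [e1] at p'
        exact CE φ _ m none Δ? (Or.inl p'.swap) hR
      rcases Sym2.eq_iff.mp heq with ⟨h1, h2⟩ | ⟨h1, h2⟩
      · exact key h1.symm
      · exact key h2.symm
    | ctr a p heq =>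
      rcases Sym2.eq_iff.mp heq with ⟨h1, h2⟩ | ⟨h1, h2⟩
      · simp [ra] at h2
      · simp [ra] at h1
    | andL₁ α β Δc p heq =>
      rcases Sym2.eq_iff.mp heq with ⟨h1, h2⟩ | ⟨h1, h2⟩
      · simp [la, ra] at h1
      · simp [la, ra] at h2
    | andL₂ α β Δc p heq =>
      rcases Sym2.eq_iff.mp heq with ⟨h1, h2⟩ | ⟨h1, h2⟩
      · simp [la, ra] at h1
      · simp [la, ra] at h2
    | orL α β Δc p1 p2 heq =>
      rcases Sym2.eq_iff.mp heq with ⟨h1, h2⟩ | ⟨h1, h2⟩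
      · simp [la, ra] at h1
      · simp [la, ra] at h2
    | negL Γc α p heq =>
      rcases Sym2.eq_iff.mp heq with ⟨h1, h2⟩ | ⟨h1, h2⟩
      · simp [la, ra] at h2
      · simp [la, ra] at h1
    | botL Δc heq =>
      rcases Sym2.eq_iff.mp heq with ⟨h1, h2⟩ | ⟨h1, h2⟩
      · simp [la, ra] at h1
      · simp [la, ra] at h2
    | topR Γc heq =>
      have key : ra (φ : Formula X) = ra Formula.top → Γc = ra φ →
          EW A s((none : Option (Ann X)), Δ?) := by
        intro e1 e2
        simp only [ra, Option.some.injEq, Ann.R.injEq] at e1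
        subst e1
        refine MR Formula.top m none Δ? HD1
          (fun m' Δ'' hm' hr => CE Formula.top _ m' none Δ'' (Or.inr ⟨rfl, D1'⟩) hr)
          (fun Δ' _ inv => ?_) hR
        rw [LInv_top] at inv
        exact inv.elim
      rcases Sym2.eq_iff.mp heq with ⟨h1, h2⟩ | ⟨h1, h2⟩
      · exact key h2 h1.symm
      · exact key h1 h2.symm
    | andR Γc α β p1 p2 heq =>
      have key : ra (φ : Formula X) = ra (α.and β) → Γc = ra φ →
          EW A s((none : Option (Ann X)), Δ?) := by
        intro e1 e2
        simp only [ra, Option.some.injEq, Ann.R.injEq] at e1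
        subst e1
        have p1' := p1; have p2' := p2
        rw [e2] at p1' p2'
        refine MR (α.and β) m none Δ? HD1
          (fun m' Δ'' hm' hr => CE (α.and β) _ m' none Δ'' (Or.inr ⟨rfl, D1'⟩) hr)
          (fun Δ' hcond inv => ?_) hR
        have hΔ' : Δ' = Δ? := by
          rcases hcond with h | ⟨h', h⟩
          · exact h
          · rw [h, h']
        subst hΔ'
        rw [LInv_and] at inv
        rcases inv with ⟨k, q⟩ | ⟨k, q⟩
        · have E1 := CE (α.and β) _ m (ra α) Δ' (Or.inl p1'.swap) hR
          obtain ⟨k1, E1⟩ := E1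
          exact ((CE α k1 k Δ' Δ' (Or.inl E1.swap) (Or.inl q)).ctr').swap'
        · have E2 := CE (α.and β) _ m (ra β) Δ' (Or.inl p2'.swap) hR
          obtain ⟨k2, E2⟩ := E2
          exact ((CE β k2 k Δ' Δ' (Or.inl E2.swap) (Or.inl q)).ctr').swap'
      rcases Sym2.eq_iff.mp heq with ⟨h1, h2⟩ | ⟨h1, h2⟩
      · exact key h2 h1.symm
      · exact key h1 h2.symm
    | orR₁ Γc α β p heq =>
      have key : ra (φ : Formula X) = ra (α.or β) → Γc = ra φ →
          EW A s((none : Option (Ann X)), Δ?) := by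
        intro e1 e2
        simp only [ra, Option.some.injEq, Ann.R.injEq] at e1
        subst e1
        have p' := p; rw [e2] at p'
        refine MR (α.or β) m none Δ? HD1
          (fun m' Δ'' hm' hr => CE (α.or β) _ m' none Δ'' (Or.inr ⟨rfl, D1'⟩) hr)
          (fun Δ' hcond inv => ?_) hR
        have hΔ' : Δ' = Δ? := by
          rcases hcond with h | ⟨h', h⟩
          · exact h
          · rw [h, h']
        subst hΔ'
        rw [LInv_or] at inv
        obtain ⟨⟨k, q⟩, -⟩ := inv
        have E := CE (α.or β) _ m (ra α) Δ' (Or.inl p'.swap) hR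
        obtain ⟨k1, E⟩ := E
        exact ((CE α k1 k Δ' Δ' (Or.inl E.swap) (Or.inl q)).ctr').swap'
      rcases Sym2.eq_iff.mp heq with ⟨h1, h2⟩ | ⟨h1, h2⟩
      · exact key h2 h1.symm
      · exact key h1 h2.symm
    | orR₂ Γc α β p heq =>
      have key : ra (φ : Formula X) = ra (α.or β) → Γc = ra φ →
          EW A s((none : Option (Ann X)), Δ?) := by
        intro e1 e2
        simp only [ra, Option.some.injEq, Ann.R.injEq] at e1
        subst e1
        have p' := p; rw [e2] at p'
        refine MR (α.or β) m none Δ? HD1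
          (fun m' Δ'' hm' hr => CE (α.or β) _ m' none Δ'' (Or.inr ⟨rfl, D1'⟩) hr)
          (fun Δ' hcond inv => ?_) hR
        have hΔ' : Δ' = Δ? := by
          rcases hcond with h | ⟨h', h⟩
          · exact h
          · rw [h, h']
        subst hΔ'
        rw [LInv_or] at inv
        obtain ⟨-, ⟨k, q⟩⟩ := inv
        have E := CE (α.or β) _ m (ra β) Δ' (Or.inl p'.swap) hR
        obtain ⟨k1, E⟩ := E
        exact ((CE β k1 k Δ' Δ' (Or.inl E.swap) (Or.inl q)).ctr').swap'
      rcases Sym2.eq_iff.mp heq with ⟨h1, h2⟩ | ⟨h1, h2⟩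
      · exact key h2 h1.symm
      · exact key h1 h2.symm
    | negR α Δc p heq =>
      have key : ra (φ : Formula X) = ra α.not → Δc = ra φ →
          EW A s((none : Option (Ann X)), Δ?) := by
        intro e1 e2
        simp only [ra, Option.some.injEq, Ann.R.injEq] at e1
        subst e1
        have p' := p; rw [e2] at p'
        refine MR α.not m none Δ? HD1
          (fun m' Δ'' hm' hr => CE α.not _ m' none Δ'' (Or.inr ⟨rfl, D1'⟩) hr)
          (fun Δ' hcond inv => ?_) hR
        have hΔ' : Δ' = Δ? := by
          rcases hcond with h | ⟨h', h⟩
          · exact h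
          · rw [h, h']
        subst hΔ'
        rw [LInv_not] at inv
        obtain ⟨k, q⟩ := inv
        have E := CE α.not _ m (la α) Δ' (Or.inl p') hR
        obtain ⟨k1, E⟩ := E
        exact ((CE α k k1 Δ' Δ' (Or.inl q) (Or.inl E)).ctr').swap'
      rcases Sym2.eq_iff.mp heq with ⟨h1, h2⟩ | ⟨h1, h2⟩
      · exact key h1 h2.symm
      · exact key h2 h1.symm
termination_by (φ.size, n + m)
decreasing_by
  all_goals simp_wf
  all_goals first
    | (apply Prod.Lex.right; omega)
    | (apply Prod.Lex.left
       first
         | (simp only [Formula.size]; omega)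
         | omega)
    | (first
        | (simp only [ra, la, Option.some.injEq, Ann.R.injEq, Ann.L.injEq] at e1; rw [e1])
        | (simp only [ra, la, Option.some.injEq, Ann.R.injEq, Ann.L.injEq] at h2; rw [h2])
        | (simp only [ra, la, Option.some.injEq, Ann.R.injEq, Ann.L.injEq] at h1; rw [h1])
       first
         | (apply Prod.Lex.right; omega)
         | (apply Prod.Lex.left
            first
              | (simp only [Formula.size]; omega)
              | omega))

theorem upg {a b : Ann X} (h : EW A (emb s(a, b))) : EW A s(some a, some b) := by
  by_cases hd : a = b
  · subst hd
    rw [emb_mk, if_pos rfl] at h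
    exact EW.wk' h
  · rwa [emb_mk, if_neg hd] at h

theorem dng {a b : Ann X} (h : EW A s(some a, some b)) : EW A (emb s(a, b)) := by
  by_cases hd : a = b
  · subst hd
    rw [emb_mk, if_pos rfl]
    obtain ⟨n, h⟩ := h
    exact ⟨n+1, W.ctr a h rfl⟩
  · rwa [emb_mk, if_neg hd]

/-- Forward translation with cut elimination: any `OLProof` yields a wide proof
with cuts only on axiom formulas. -/
theorem fwd {t : Sequent X} (h : OLProof A t) : EW A (emb t) := by
  induction h with
  | ax h => exact ⟨1, W.ax h rfl⟩
  | hyp φ =>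
    rw [emb_mk, if_neg (by simp)]
    exact ⟨1, W.hyp φ rfl⟩
  | cut Γ Δ ψ h1 h2 ih1 ih2 =>
    obtain ⟨n1, g1⟩ := upg ih1
    obtain ⟨n2, g2⟩ := upg ih2
    exact dng (CE ψ n1 n2 (some Γ) (some Δ) (Or.inl g1) (Or.inl g2))
  | replace Γ Δ _ ih =>
    rw [emb_mk, if_pos rfl] at ih
    exact dng (EW.wk' ih)
  | andL₁ φ ψ Δ _ ih => exact dng (EW.andL₁' (upg ih))
  | andL₂ φ ψ Δ _ ih => exact dng (EW.andL₂' (upg ih))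
  | andR Γ φ ψ _ _ ih1 ih2 => exact dng (EW.andR' (upg ih1) (upg ih2))
  | orL φ ψ Δ _ _ ih1 ih2 => exact dng (EW.orL' (upg ih1) (upg ih2))
  | orR₁ Γ φ ψ _ ih => exact dng (EW.orR₁' (upg ih))
  | orR₂ Γ φ ψ _ ih => exact dng (EW.orR₂' (upg ih))
  | negL Γ φ _ ih => exact dng (EW.negL' (upg ih))
  | negR φ Δ _ ih => exact dng (EW.negR' (upg ih))
  | botL Δ => exact dng (EW.botL' (some Δ))
  | topR Γ => exact dng (EW.topR' (some Γ))

theorem inSwap {S : Set (Sequent X)} {a b : Ann X}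
    (h : OLProofIn A S s(a, b)) : OLProofIn A S s(b, a) := by
  rwa [Sym2.eq_swap]

/-- Back translation: a wide proof (with cuts on axiom formulas only) yields an
`OLProofIn` proof staying inside any subformula-closed set. -/
theorem back {Elt : Ann X → Prop} {S : Set (Sequent X)}
    (hax : ∀ u ∈ A, ∀ x ∈ u, Elt x)
    (hsub : ∀ x y : Ann X, Elt y → Subformula (Ann.fml x) (Ann.fml y) → Elt x)
    (hmem : ∀ a b : Ann X, Elt a → Elt b → s(a, b) ∈ S)
    {k : ℕ} {u : OSeq X} (h : W A k u) :
    (∀ a b : Ann X, u = s(some a, some b) → Elt a → Elt b → OLProofIn A S s(a, b)) ∧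
    (∀ a : Ann X, u = s(some a, none) → Elt a → ∀ b, Elt b → OLProofIn A S s(a, b)) ∧
    (u = s(none, none) → ∀ a b : Ann X, Elt a → Elt b → OLProofIn A S s(a, b)) := by
  induction h with
  | @ax n t' u' hu heq =>
    subst heq
    refine ⟨?_, ?_, ?_⟩
    · intro a b h e1 e2
      have hu' := emb_eq_pair h
      subst hu'
      exact OLProofIn.ax hu (hmem a b e1 e2)
    · intro a h e1 b e2
      have hu' := emb_eq_single h
      subst hu'
      exact OLProofIn.replace a b (hmem a b e1 e2) (OLProofIn.ax hu (hmem a a e1 e1))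
    · intro h
      exact absurd h emb_ne_empty
  | hyp φ heq =>
    subst heq
    refine ⟨?_, ?_, ?_⟩
    · intro a b h e1 e2
      rcases Sym2.eq_iff.mp h with ⟨h1, h2⟩ | ⟨h1, h2⟩
      · simp only [la, ra, Option.some.injEq] at h1 h2
        subst h1; subst h2
        exact OLProofIn.hyp φ (hmem _ _ e1 e2)
      · simp only [la, ra, Option.some.injEq] at h1 h2
        subst h1; subst h2
        exact inSwap (OLProofIn.hyp φ (hmem _ _ e2 e1))
    · intro a h e1 b e2
      rcases Sym2.eq_iff.mp h with ⟨h1, h2⟩ | ⟨h1, h2⟩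
      · simp [ra] at h2
      · simp [la] at h1
    · intro h
      rcases Sym2.eq_iff.mp h with ⟨h1, h2⟩ | ⟨h1, h2⟩ <;> simp [la, ra] at h1
  | cut Γc Δc ψ hC p1 p2 heq ih1 ih2 =>
    subst heq
    obtain ⟨w, hw, c, hcw, hfml⟩ := hC
    have ec : Elt c := hax w hw c hcw
    have eL : Elt (Ann.L ψ) := hsub _ c ec (by show Subformula ψ _; rw [hfml]; exact .refl ψ)
    have eR : Elt (Ann.R ψ) := hsub _ c ec (by show Subformula ψ _; rw [hfml]; exact .refl ψ)
    refine ⟨?_, ?_, ?_⟩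
    · intro a b h e1 e2
      rcases Sym2.eq_iff.mp h with ⟨h1, h2⟩ | ⟨h1, h2⟩
      · subst h1; subst h2
        exact OLProofIn.cut a b ψ (hmem a b e1 e2)
          (ih1.1 a (Ann.R ψ) rfl e1 eR) (ih2.1 (Ann.L ψ) b rfl eL e2)
      · subst h1; subst h2
        exact inSwap (OLProofIn.cut b a ψ (hmem b a e2 e1)
          (ih1.1 b (Ann.R ψ) rfl e2 eR) (ih2.1 (Ann.L ψ) a rfl eL e1))
    · intro a h e1 b e2
      rcases Sym2.eq_iff.mp h with ⟨h1, h2⟩ | ⟨h1, h2⟩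
      · subst h1; subst h2
        exact OLProofIn.cut a b ψ (hmem a b e1 e2)
          (ih1.1 a (Ann.R ψ) rfl e1 eR) (ih2.2.1 (Ann.L ψ) rfl eL b e2)
      · subst h1; subst h2
        refine inSwap (OLProofIn.cut b a ψ (hmem b a e2 e1) ?_ ?_)
        · exact inSwap (ih1.2.1 (Ann.R ψ) Sym2.eq_swap eR b e2)
        · exact ih2.1 (Ann.L ψ) a rfl eL e1
    · intro h a b e1 e2
      rcases Sym2.eq_iff.mp h with ⟨h1, h2⟩ | ⟨h1, h2⟩ <;>
      · subst h1; subst h2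
        refine OLProofIn.cut a b ψ (hmem a b e1 e2) ?_ ?_
        · exact inSwap (ih1.2.1 (Ann.R ψ) Sym2.eq_swap eR a e1)
        · exact ih2.2.1 (Ann.L ψ) rfl eL b e2
  | wk Γc Δc p heq ih =>
    subst heq
    refine ⟨?_, ?_, ?_⟩
    · intro a b h e1 e2
      rcases Sym2.eq_iff.mp h with ⟨h1, h2⟩ | ⟨h1, h2⟩
      · subst h1; subst h2
        exact ih.2.1 a rfl e1 b e2
      · subst h1; subst h2
        exact inSwap (ih.2.1 b rfl e2 a e1)
    · intro a h e1 b e2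
      rcases Sym2.eq_iff.mp h with ⟨h1, h2⟩ | ⟨h1, h2⟩
      · subst h1; subst h2
        exact ih.2.1 a rfl e1 b e2
      · subst h1; subst h2
        exact ih.2.2 rfl a b e1 e2
    · intro h
      rcases Sym2.eq_iff.mp h with ⟨h1, h2⟩ | ⟨h1, h2⟩ <;>
      · subst h1; subst h2
        exact ih.2.2 rfl
  | ctr c p heq ih =>
    subst heq
    refine ⟨?_, ?_, ?_⟩
    · intro a b h e1 e2
      rcases Sym2.eq_iff.mp h with ⟨h1, h2⟩ | ⟨h1, h2⟩
      · simp at h2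
      · simp at h2
    · intro a h e1 b e2
      rcases Sym2.eq_iff.mp h with ⟨h1, h2⟩ | ⟨h1, h2⟩
      · simp only [Option.some.injEq] at h1
        subst h1
        exact OLProofIn.replace c b (hmem c b e1 e2) (ih.1 c c rfl e1 e1)
      · simp at h2
    · intro h
      rcases Sym2.eq_iff.mp h with ⟨h1, h2⟩ | ⟨h1, h2⟩
      · simp at h1
      · simp at h1
  | andL₁ α β Δc p heq ih =>
    subst heq
    have esub : Elt (Ann.L (α.and β)) → Elt (Ann.L α) := fun e =>
      hsub _ _ e (Subformula.and_left (.refl α))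
    refine ⟨?_, ?_, ?_⟩
    · intro a b h e1 e2
      rcases Sym2.eq_iff.mp h with ⟨h1, h2⟩ | ⟨h1, h2⟩
      · simp only [la, Option.some.injEq] at h1
        subst h1; subst h2
        exact OLProofIn.andL₁ α β b (hmem _ b e1 e2)
          (ih.1 (Ann.L α) b rfl (esub e1) e2)
      · simp only [la, Option.some.injEq] at h1
        subst h1; subst h2
        exact inSwap (OLProofIn.andL₁ α β a (hmem _ a e2 e1)
          (ih.1 (Ann.L α) a rfl (esub e2) e1))
    · intro a h e1 b e2
      rcases Sym2.eq_iff.mp h with ⟨h1, h2⟩ | ⟨h1, h2⟩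
      · simp only [la, Option.some.injEq] at h1
        subst h1; subst h2
        exact OLProofIn.andL₁ α β b (hmem _ b e1 e2)
          (ih.2.1 (Ann.L α) rfl (esub e1) b e2)
      · simp [la] at h1
    · intro h
      rcases Sym2.eq_iff.mp h with ⟨h1, h2⟩ | ⟨h1, h2⟩ <;> simp [la] at h1 h2
  | andL₂ α β Δc p heq ih =>
    subst heq
    have esub : Elt (Ann.L (α.and β)) → Elt (Ann.L β) := fun e =>
      hsub _ _ e (Subformula.and_right (.refl β))
    refine ⟨?_, ?_, ?_⟩
    · intro a b h e1 e2
      rcases Sym2.eq_iff.mp h with ⟨h1, h2⟩ | ⟨h1, h2⟩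
      · simp only [la, Option.some.injEq] at h1
        subst h1; subst h2
        exact OLProofIn.andL₂ α β b (hmem _ b e1 e2)
          (ih.1 (Ann.L β) b rfl (esub e1) e2)
      · simp only [la, Option.some.injEq] at h1
        subst h1; subst h2
        exact inSwap (OLProofIn.andL₂ α β a (hmem _ a e2 e1)
          (ih.1 (Ann.L β) a rfl (esub e2) e1))
    · intro a h e1 b e2
      rcases Sym2.eq_iff.mp h with ⟨h1, h2⟩ | ⟨h1, h2⟩
      · simp only [la, Option.some.injEq] at h1
        subst h1; subst h2
        exact OLProofIn.andL₂ α β b (hmem _ b e1 e2)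
          (ih.2.1 (Ann.L β) rfl (esub e1) b e2)
      · simp [la] at h1
    · intro h
      rcases Sym2.eq_iff.mp h with ⟨h1, h2⟩ | ⟨h1, h2⟩ <;> simp [la] at h1 h2
  | orL α β Δc p1 p2 heq ih1 ih2 =>
    subst heq
    have esub1 : Elt (Ann.L (α.or β)) → Elt (Ann.L α) := fun e =>
      hsub _ _ e (Subformula.or_left (.refl α))
    have esub2 : Elt (Ann.L (α.or β)) → Elt (Ann.L β) := fun e =>
      hsub _ _ e (Subformula.or_right (.refl β))
    refine ⟨?_, ?_, ?_⟩
    · intro a b h e1 e2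
      rcases Sym2.eq_iff.mp h with ⟨h1, h2⟩ | ⟨h1, h2⟩
      · simp only [la, Option.some.injEq] at h1
        subst h1; subst h2
        exact OLProofIn.orL α β b (hmem _ b e1 e2)
          (ih1.1 (Ann.L α) b rfl (esub1 e1) e2) (ih2.1 (Ann.L β) b rfl (esub2 e1) e2)
      · simp only [la, Option.some.injEq] at h1
        subst h1; subst h2
        exact inSwap (OLProofIn.orL α β a (hmem _ a e2 e1)
          (ih1.1 (Ann.L α) a rfl (esub1 e2) e1) (ih2.1 (Ann.L β) a rfl (esub2 e2) e1))
    · intro a h e1 b e2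
      rcases Sym2.eq_iff.mp h with ⟨h1, h2⟩ | ⟨h1, h2⟩
      · simp only [la, Option.some.injEq] at h1
        subst h1; subst h2
        exact OLProofIn.orL α β b (hmem _ b e1 e2)
          (ih1.2.1 (Ann.L α) rfl (esub1 e1) b e2) (ih2.2.1 (Ann.L β) rfl (esub2 e1) b e2)
      · simp [la] at h1
    · intro h
      rcases Sym2.eq_iff.mp h with ⟨h1, h2⟩ | ⟨h1, h2⟩ <;> simp [la] at h1 h2
  | andR Γc α β p1 p2 heq ih1 ih2 =>
    subst heq
    have esub1 : Elt (Ann.R (α.and β)) → Elt (Ann.R α) := fun e =>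
      hsub _ _ e (Subformula.and_left (.refl α))
    have esub2 : Elt (Ann.R (α.and β)) → Elt (Ann.R β) := fun e =>
      hsub _ _ e (Subformula.and_right (.refl β))
    refine ⟨?_, ?_, ?_⟩
    · intro a b h e1 e2
      rcases Sym2.eq_iff.mp h with ⟨h1, h2⟩ | ⟨h1, h2⟩
      · simp only [ra, Option.some.injEq] at h2
        subst h1; subst h2
        exact OLProofIn.andR a α β (hmem a _ e1 e2)
          (ih1.1 a (Ann.R α) rfl e1 (esub1 e2)) (ih2.1 a (Ann.R β) rfl e1 (esub2 e2))
      · simp only [ra, Option.some.injEq] at h2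
        subst h1; subst h2
        exact inSwap (OLProofIn.andR b α β (hmem b _ e2 e1)
          (ih1.1 b (Ann.R α) rfl e2 (esub1 e1)) (ih2.1 b (Ann.R β) rfl e2 (esub2 e1)))
    · intro a h e1 b e2
      rcases Sym2.eq_iff.mp h with ⟨h1, h2⟩ | ⟨h1, h2⟩
      · simp [ra] at h2
      · simp only [ra, Option.some.injEq] at h2
        subst h1; subst h2
        have E1 := ih1.2.1 (Ann.R α) Sym2.eq_swap (esub1 e1) _ e1
        have E2 := ih2.2.1 (Ann.R β) Sym2.eq_swap (esub2 e1) _ e1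
        have G0 : OLProofIn A S s(Ann.R (α.and β), Ann.R (α.and β)) :=
          OLProofIn.andR _ α β (hmem _ _ e1 e1) (inSwap E1) (inSwap E2)
        exact OLProofIn.replace _ b (hmem _ b e1 e2) G0
    · intro h
      rcases Sym2.eq_iff.mp h with ⟨h1, h2⟩ | ⟨h1, h2⟩
      · simp [ra] at h2
      · simp [ra] at h2
  | orR₁ Γc α β p heq ih =>
    subst heq
    have esub : Elt (Ann.R (α.or β)) → Elt (Ann.R α) := fun e =>
      hsub _ _ e (Subformula.or_left (.refl α))
    refine ⟨?_, ?_, ?_⟩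
    · intro a b h e1 e2
      rcases Sym2.eq_iff.mp h with ⟨h1, h2⟩ | ⟨h1, h2⟩
      · simp only [ra, Option.some.injEq] at h2
        subst h1; subst h2
        exact OLProofIn.orR₁ a α β (hmem a _ e1 e2) (ih.1 a (Ann.R α) rfl e1 (esub e2))
      · simp only [ra, Option.some.injEq] at h2
        subst h1; subst h2
        exact inSwap (OLProofIn.orR₁ b α β (hmem b _ e2 e1)
          (ih.1 b (Ann.R α) rfl e2 (esub e1)))
    · intro a h e1 b e2
      rcases Sym2.eq_iff.mp h with ⟨h1, h2⟩ | ⟨h1, h2⟩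
      · simp [ra] at h2
      · simp only [ra, Option.some.injEq] at h2
        subst h1; subst h2
        have E := ih.2.1 (Ann.R α) Sym2.eq_swap (esub e1) _ e1
        have G0 : OLProofIn A S s(Ann.R (α.or β), Ann.R (α.or β)) :=
          OLProofIn.orR₁ _ α β (hmem _ _ e1 e1) (inSwap E)
        exact OLProofIn.replace _ b (hmem _ b e1 e2) G0
    · intro h
      rcases Sym2.eq_iff.mp h with ⟨h1, h2⟩ | ⟨h1, h2⟩
      · simp [ra] at h2
      · simp [ra] at h2
  | orR₂ Γc α β p heq ih =>
    subst heq
    have esub : Elt (Ann.R (α.or β)) → Elt (Ann.R β) := fun e =>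
      hsub _ _ e (Subformula.or_right (.refl β))
    refine ⟨?_, ?_, ?_⟩
    · intro a b h e1 e2
      rcases Sym2.eq_iff.mp h with ⟨h1, h2⟩ | ⟨h1, h2⟩
      · simp only [ra, Option.some.injEq] at h2
        subst h1; subst h2
        exact OLProofIn.orR₂ a α β (hmem a _ e1 e2) (ih.1 a (Ann.R β) rfl e1 (esub e2))
      · simp only [ra, Option.some.injEq] at h2
        subst h1; subst h2
        exact inSwap (OLProofIn.orR₂ b α β (hmem b _ e2 e1)
          (ih.1 b (Ann.R β) rfl e2 (esub e1)))
    · intro a h e1 b e2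
      rcases Sym2.eq_iff.mp h with ⟨h1, h2⟩ | ⟨h1, h2⟩
      · simp [ra] at h2
      · simp only [ra, Option.some.injEq] at h2
        subst h1; subst h2
        have E := ih.2.1 (Ann.R β) Sym2.eq_swap (esub e1) _ e1
        have G0 : OLProofIn A S s(Ann.R (α.or β), Ann.R (α.or β)) :=
          OLProofIn.orR₂ _ α β (hmem _ _ e1 e1) (inSwap E)
        exact OLProofIn.replace _ b (hmem _ b e1 e2) G0
    · intro h
      rcases Sym2.eq_iff.mp h with ⟨h1, h2⟩ | ⟨h1, h2⟩
      · simp [ra] at h2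
      · simp [ra] at h2
  | negL Γc α p heq ih =>
    subst heq
    have esub : Elt (Ann.L α.not) → Elt (Ann.R α) := fun e =>
      hsub _ _ e (Subformula.not_sub (.refl α))
    refine ⟨?_, ?_, ?_⟩
    · intro a b h e1 e2
      rcases Sym2.eq_iff.mp h with ⟨h1, h2⟩ | ⟨h1, h2⟩
      · simp only [la, Option.some.injEq] at h2
        subst h1; subst h2
        exact OLProofIn.negL a α (hmem a _ e1 e2) (ih.1 a (Ann.R α) rfl e1 (esub e2))
      · simp only [la, Option.some.injEq] at h2
        subst h1; subst h2
        exact inSwap (OLProofIn.negL b α (hmem b _ e2 e1)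
          (ih.1 b (Ann.R α) rfl e2 (esub e1)))
    · intro a h e1 b e2
      rcases Sym2.eq_iff.mp h with ⟨h1, h2⟩ | ⟨h1, h2⟩
      · simp [la] at h2
      · simp only [la, Option.some.injEq] at h2
        subst h1; subst h2
        have E := ih.2.1 (Ann.R α) Sym2.eq_swap (esub e1) _ e1
        have G0 : OLProofIn A S s(Ann.L α.not, Ann.L α.not) :=
          OLProofIn.negL _ α (hmem _ _ e1 e1) (inSwap E)
        exact OLProofIn.replace _ b (hmem _ b e1 e2) G0
    · intro h
      rcases Sym2.eq_iff.mp h with ⟨h1, h2⟩ | ⟨h1, h2⟩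
      · simp [la] at h2
      · simp [la] at h2
  | negR α Δc p heq ih =>
    subst heq
    have esub : Elt (Ann.R α.not) → Elt (Ann.L α) := fun e =>
      hsub _ _ e (Subformula.not_sub (.refl α))
    refine ⟨?_, ?_, ?_⟩
    · intro a b h e1 e2
      rcases Sym2.eq_iff.mp h with ⟨h1, h2⟩ | ⟨h1, h2⟩
      · simp only [ra, Option.some.injEq] at h1
        subst h1; subst h2
        exact OLProofIn.negR α b (hmem _ b e1 e2) (ih.1 (Ann.L α) b rfl (esub e1) e2)
      · simp only [ra, Option.some.injEq] at h1
        subst h1; subst h2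
        exact inSwap (OLProofIn.negR α a (hmem _ a e2 e1)
          (ih.1 (Ann.L α) a rfl (esub e2) e1))
    · intro a h e1 b e2
      rcases Sym2.eq_iff.mp h with ⟨h1, h2⟩ | ⟨h1, h2⟩
      · simp only [ra, Option.some.injEq] at h1
        subst h1; subst h2
        exact OLProofIn.negR α b (hmem _ b e1 e2) (ih.2.1 (Ann.L α) rfl (esub e1) b e2)
      · simp [ra] at h1
    · intro h
      rcases Sym2.eq_iff.mp h with ⟨h1, h2⟩ | ⟨h1, h2⟩
      · simp [ra] at h1
      · simp [ra] at h1
  | botL Δc heq =>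
    subst heq
    refine ⟨?_, ?_, ?_⟩
    · intro a b h e1 e2
      rcases Sym2.eq_iff.mp h with ⟨h1, h2⟩ | ⟨h1, h2⟩
      · simp only [la, Option.some.injEq] at h1
        subst h1; subst h2
        exact OLProofIn.botL b (hmem _ b e1 e2)
      · simp only [la, Option.some.injEq] at h1
        subst h1; subst h2
        exact inSwap (OLProofIn.botL a (hmem _ a e2 e1))
    · intro a h e1 b e2
      rcases Sym2.eq_iff.mp h with ⟨h1, h2⟩ | ⟨h1, h2⟩
      · simp only [la, Option.some.injEq] at h1
        subst h1; subst h2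
        exact OLProofIn.botL b (hmem _ b e1 e2)
      · simp [la] at h1
    · intro h
      rcases Sym2.eq_iff.mp h with ⟨h1, h2⟩ | ⟨h1, h2⟩ <;> simp [la] at h1 h2
  | topR Γc heq =>
    subst heq
    refine ⟨?_, ?_, ?_⟩
    · intro a b h e1 e2
      rcases Sym2.eq_iff.mp h with ⟨h1, h2⟩ | ⟨h1, h2⟩
      · simp only [ra, Option.some.injEq] at h2
        subst h1; subst h2
        exact OLProofIn.topR a (hmem a _ e1 e2)
      · simp only [ra, Option.some.injEq] at h2
        subst h1; subst h2
        exact inSwap (OLProofIn.topR b (hmem b _ e2 e1))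
    · intro a h e1 b e2
      rcases Sym2.eq_iff.mp h with ⟨h1, h2⟩ | ⟨h1, h2⟩
      · simp [ra] at h2
      · simp only [ra, Option.some.injEq] at h2
        subst h1; subst h2
        exact inSwap (OLProofIn.topR b (hmem b _ e2 e1))
    · intro h
      rcases Sym2.eq_iff.mp h with ⟨h1, h2⟩ | ⟨h1, h2⟩
      · simp [ra] at h2
      · simp [ra] at h2

end OLSub
/-- Subformula property: a sequent provable from axioms `A` has a
proof in which every formula occurring in any sequent of the proof is a
subformula of a formula of the conclusion or of a formula occurring in `A`. -/
theorem ol_subformula_property {X : Type} [Countable X] [Infinite X]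
    (A : Set (Sequent X)) (t : Sequent X) (h : OLProof A t) :
    OLProofIn A
      {u : Sequent X | ∀ a ∈ u, ∃ b : Ann X,
        (b ∈ t ∨ ∃ w ∈ A, b ∈ w) ∧ Subformula (Ann.fml a) (Ann.fml b)} t := by
  induction t using Sym2.inductionOn with
  | hf a b =>
    set Elt : Ann X → Prop := fun x => ∃ c : Ann X,
      (c ∈ s(a, b) ∨ ∃ w ∈ A, c ∈ w) ∧ Subformula (Ann.fml x) (Ann.fml c) with hElt
    have hax : ∀ u ∈ A, ∀ x ∈ u, Elt x := fun u hu x hx =>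
      ⟨x, Or.inr ⟨u, hu, hx⟩, Subformula.refl _⟩
    have hsub : ∀ x y : Ann X, Elt y → Subformula (Ann.fml x) (Ann.fml y) → Elt x := by
      rintro x y ⟨c, hc, hs⟩ hxy
      exact ⟨c, hc, OLSub.Subformula.trans' hxy hs⟩
    have hmem : ∀ x y : Ann X, Elt x → Elt y →
        s(x, y) ∈ {u : Sequent X | ∀ z ∈ u, Elt z} := by
      intro x y ex ey z hz
      rcases Sym2.mem_iff.mp hz with rfl | rfl
      · exact ex
      · exact ey
    have ea : Elt a := ⟨a, Or.inl (Sym2.mem_mk_left a b), Subformula.refl _⟩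
    have eb : Elt b := ⟨b, Or.inl (Sym2.mem_mk_right a b), Subformula.refl _⟩
    obtain ⟨k, hw⟩ := OLSub.fwd h
    have B := OLSub.back (A := A) (Elt := Elt) hax hsub hmem hw
    by_cases hd : a = b
    · subst hd
      exact B.2.1 a (by rw [OLSub.emb_mk, if_pos rfl]) ea a ea
    · exact B.1 a b (by rw [OLSub.emb_mk, if_neg hd]) ea eb
end

section
/- Equivalence of the right-only NNF proof system: let A be a set of sequents each of the form (φ^R, ψ^R) with φ and ψ in NNF. For formulas φ, ψ in NNF, the sequent (φ^R, ψ^R) is provable in the full orthologic proof system from A if and only if it is derivable in the restricted right-only system whose rules are: Ax (any sequent of A); Hyp': (x^R, (¬x)^R) for each variable x; Cut': from (φ^R, γ^R) and ((getInverse(γ))^R, ψ^R) derive (φ^R, ψ^R); Replace: from (γ^R, γ^R) derive (γ^R, δ^R) for any NNF formula δ; ∧-R and ∨-R as in the full system; and the axiom (γ^R, ⊤^R). -/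
/-- The restricted right-only proof system on NNF formulas. A sequent is here an
unordered pair of formulas `(φ, ψ)`, standing for `(φ^R, ψ^R)`. -/
inductive OLRight {X : Type} (A : Set (Sym2 (Formula X))) : Sym2 (Formula X) → Prop
  | ax {t : Sym2 (Formula X)} : t ∈ A → OLRight A t
  | hyp (x : X) : OLRight A s(Formula.var x, (Formula.var x).not)
  | cut (φ γ ψ : Formula X) :
      OLRight A s(φ, γ) → OLRight A s(getInverse γ, ψ) → OLRight A s(φ, ψ)
  | replace (γ δ : Formula X) : δ.IsNNF → OLRight A s(γ, γ) → OLRight A s(γ, δ)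
  | andR (γ φ ψ : Formula X) :
      OLRight A s(γ, φ) → OLRight A s(γ, ψ) → OLRight A s(γ, φ.and ψ)
  | orR₁ (γ φ ψ : Formula X) : OLRight A s(γ, φ) → OLRight A s(γ, φ.or ψ)
  | orR₂ (γ φ ψ : Formula X) : OLRight A s(γ, ψ) → OLRight A s(γ, φ.or ψ)
  | topR (γ : Formula X) : OLRight A s(γ, Formula.top)

/-- The least set `P` of unordered pairs over `SF` computed by the entailment
algorithm: it contains the axioms `A` and the hypothesis pairs `(x, ¬x)`, and is
closed under the ∨-step, ∧-step, Replace-step and Cut-step. -/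
inductive Deduced {X : Type} (A : Set (Sym2 (Formula X))) (SF AF : Set (Formula X)) :
    Sym2 (Formula X) → Prop
  | ax {t : Sym2 (Formula X)} : t ∈ A → Deduced A SF AF t
  | hyp (x : X) : Formula.var x ∈ SF → (Formula.var x).not ∈ SF →
      Deduced A SF AF s(Formula.var x, (Formula.var x).not)
  | orStep (a b k : Formula X) : a.or k ∈ SF →
      Deduced A SF AF s(a, b) → Deduced A SF AF s(a.or k, b)
  | andStep (a b k : Formula X) : a.and k ∈ SF →
      Deduced A SF AF s(a, b) → Deduced A SF AF s(k, b) → Deduced A SF AF s(a.and k, b)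
  | replaceStep (a γ : Formula X) : γ ∈ SF →
      Deduced A SF AF s(a, a) → Deduced A SF AF s(a, γ)
  | cutStep (a b c : Formula X) : c ∈ AF →
      Deduced A SF AF s(a, c) → Deduced A SF AF s(getInverse c, b) → Deduced A SF AF s(a, b)

section Aux
variable {X : Type}

theorem nnf_isNNF (φ : Formula X) : φ.nnf.IsNNF := by
  induction φ using Formula.nnf.induct <;> simp_all [Formula.nnf, Formula.IsNNF]

theorem nnf_eq_self (φ : Formula X) (h : φ.IsNNF) : φ.nnf = φ := by
  induction φ using Formula.nnf.induct <;> simp_all [Formula.nnf, Formula.IsNNF]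

theorem nnf_not_nnf (φ : Formula X) : (Formula.nnf φ).not.nnf = φ.not.nnf := by
  induction φ using Formula.nnf.induct <;> simp_all [Formula.nnf]

end Aux

section Full
variable {X : Type} {A : Set (Sequent X)}

theorem olp_swap {a b : Ann X} (h : OLProof A s(a, b)) : OLProof A s(b, a) := by
  rwa [Sym2.eq_swap]

theorem olp_L_not (φ : Formula X) : OLProof A s(Ann.L φ.not, Ann.L φ) :=
  olp_swap (OLProof.negL (Ann.L φ) φ (OLProof.hyp φ))

theorem nnf_equiv (φ : Formula X) :
    OLProof A s(Ann.L φ.nnf, Ann.R φ) ∧ OLProof A s(Ann.L φ, Ann.R φ.nnf) := by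
  induction φ using Formula.nnf.induct with
  | case1 x => simp only [Formula.nnf]; exact ⟨OLProof.hyp _, OLProof.hyp _⟩
  | case2 => simp only [Formula.nnf]; exact ⟨OLProof.hyp _, OLProof.hyp _⟩
  | case3 => simp only [Formula.nnf]; exact ⟨OLProof.hyp _, OLProof.hyp _⟩
  | case4 φ ψ ih1 ih2 =>
    simp only [Formula.nnf]
    exact ⟨OLProof.andR _ _ _ (OLProof.andL₁ _ _ _ ih1.1) (OLProof.andL₂ _ _ _ ih2.1),
           OLProof.andR _ _ _ (OLProof.andL₁ _ _ _ ih1.2) (OLProof.andL₂ _ _ _ ih2.2)⟩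
  | case5 φ ψ ih1 ih2 =>
    simp only [Formula.nnf]
    exact ⟨OLProof.orL _ _ _ (OLProof.orR₁ _ _ _ ih1.1) (OLProof.orR₂ _ _ _ ih2.1),
           OLProof.orL _ _ _ (OLProof.orR₁ _ _ _ ih1.2) (OLProof.orR₂ _ _ _ ih2.2)⟩
  | case6 x => simp only [Formula.nnf]; exact ⟨OLProof.hyp _, OLProof.hyp _⟩
  | case7 =>
    simp only [Formula.nnf]
    exact ⟨olp_swap (OLProof.negR _ _ (OLProof.botL _)), OLProof.topR _⟩
  | case8 =>
    simp only [Formula.nnf]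
    exact ⟨OLProof.botL _, olp_swap (OLProof.negL _ _ (OLProof.topR _))⟩
  | case9 φ ψ ih1 ih2 =>
    simp only [Formula.nnf]
    constructor
    · refine OLProof.orL _ _ _ ?_ ?_
      · exact OLProof.cut _ _ _ ih1.1
          (olp_swap (OLProof.negR _ _
            (OLProof.negL _ _ (OLProof.andL₁ _ _ _ (OLProof.hyp φ)))))
      · exact OLProof.cut _ _ _ ih2.1
          (olp_swap (OLProof.negR _ _
            (OLProof.negL _ _ (OLProof.andL₂ _ _ _ (OLProof.hyp ψ)))))
    · refine olp_swap (OLProof.negL _ _ (OLProof.andR _ _ _ ?_ ?_))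
      · exact olp_swap (OLProof.orR₁ _ _ _
          (OLProof.cut _ _ _ (olp_swap (OLProof.negR _ _ (OLProof.hyp φ))) ih1.2))
      · exact olp_swap (OLProof.orR₂ _ _ _
          (OLProof.cut _ _ _ (olp_swap (OLProof.negR _ _ (OLProof.hyp ψ))) ih2.2))
  | case10 φ ψ ih1 ih2 =>
    simp only [Formula.nnf]
    constructor
    · refine olp_swap (OLProof.negR _ _ (OLProof.orL _ _ _ ?_ ?_))
      · exact olp_swap (OLProof.andL₁ _ _ _
          (OLProof.cut _ _ _ ih1.1 (olp_L_not φ)))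
      · exact olp_swap (OLProof.andL₂ _ _ _
          (OLProof.cut _ _ _ ih2.1 (olp_L_not ψ)))
    · refine OLProof.andR _ _ _ ?_ ?_
      · exact OLProof.cut _ _ _
          (olp_swap (OLProof.negR _ _
            (OLProof.negL _ _ (OLProof.orR₁ _ _ _ (OLProof.hyp φ))))) ih1.2
      · exact OLProof.cut _ _ _
          (olp_swap (OLProof.negR _ _
            (OLProof.negL _ _ (OLProof.orR₂ _ _ _ (OLProof.hyp ψ))))) ih2.2
  | case11 φ ih =>
    simp only [Formula.nnf]
    exact ⟨olp_swap (OLProof.negR _ _ (olp_swap (OLProof.negL _ _ ih.1))),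
           olp_swap (OLProof.negL _ _ (olp_swap (OLProof.negR _ _ ih.2)))⟩

end Full

section Trans
variable {X : Type} {A₀ : Set (Sym2 (Formula X))}

theorem olr_swap {a b : Formula X} (h : OLRight A₀ s(a, b)) : OLRight A₀ s(b, a) := by
  rwa [Sym2.eq_swap]

/-- Right-only proofs translate to full proofs. -/
theorem right_to_full {u : Sym2 (Formula X)} (h : OLRight A₀ u) :
    OLProof (Sym2.map Ann.R '' A₀) (Sym2.map Ann.R u) := by
  induction h with
  | ax ht => exact OLProof.ax ⟨_, ht, rfl⟩
  | hyp x =>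
    simp only [Sym2.map_pair_eq]
    exact olp_swap (OLProof.negR _ _ (OLProof.hyp _))
  | cut φ γ ψ h1 h2 ih1 ih2 =>
    simp only [Sym2.map_pair_eq] at *
    have p2 : OLProof (Sym2.map Ann.R '' A₀) s(Ann.R ψ, Ann.L γ) :=
      OLProof.cut (Ann.R ψ) (Ann.L γ) (getInverse γ) (olp_swap ih2)
        (OLProof.cut (Ann.L (getInverse γ)) (Ann.L γ) γ.not (nnf_equiv γ.not).1 (olp_L_not γ))
    exact OLProof.cut _ _ γ ih1 (olp_swap p2)
  | replace γ δ hδ h ih =>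
    simp only [Sym2.map_pair_eq] at *
    exact OLProof.replace _ _ ih
  | andR γ φ ψ h1 h2 ih1 ih2 =>
    simp only [Sym2.map_pair_eq] at *
    exact OLProof.andR _ _ _ ih1 ih2
  | orR₁ γ φ ψ h ih =>
    simp only [Sym2.map_pair_eq] at *
    exact OLProof.orR₁ _ _ _ ih
  | orR₂ γ φ ψ h ih =>
    simp only [Sym2.map_pair_eq] at *
    exact OLProof.orR₂ _ _ _ ih
  | topR γ =>
    simp only [Sym2.map_pair_eq]
    exact OLProof.topR _

/-- Encoding of annotated formulas as NNF formulas. -/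
def encA : Ann X → Formula X
  | .L φ => φ.not.nnf
  | .R φ => φ.nnf

theorem encA_isNNF (a : Ann X) : (encA a).IsNNF := by
  cases a <;> exact nnf_isNNF _

theorem olr_inv_self (A₀ : Set (Sym2 (Formula X))) (φ : Formula X) :
    OLRight A₀ s(φ.not.nnf, φ.nnf) := by
  induction φ with
  | var x => simp only [Formula.nnf]; exact olr_swap (OLRight.hyp x)
  | bot => simp only [Formula.nnf]; exact olr_swap (OLRight.topR _)
  | top => simp only [Formula.nnf]; exact OLRight.topR _
  | and φ ψ ih1 ih2 =>
    simp only [Formula.nnf]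
    exact OLRight.andR _ _ _
      (olr_swap (OLRight.orR₁ _ _ _ (olr_swap ih1)))
      (olr_swap (OLRight.orR₂ _ _ _ (olr_swap ih2)))
  | or φ ψ ih1 ih2 =>
    simp only [Formula.nnf]
    exact olr_swap (OLRight.andR _ _ _
      (olr_swap (OLRight.orR₁ _ _ _ ih1))
      (olr_swap (OLRight.orR₂ _ _ _ ih2)))
  | not φ ih =>
    have : φ.not.not.nnf = φ.nnf := by simp [Formula.nnf]
    rw [this]
    exact olr_swap ih

/-- Full proofs of right-only-axiom sequents translate to right-only proofs. -/
theorem full_to_right (hA : ∀ t ∈ A₀, ∀ γ ∈ t, Formula.IsNNF γ)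
    {u : Sequent X} (h : OLProof (Sym2.map Ann.R '' A₀) u) :
    OLRight A₀ (Sym2.map encA u) := by
  induction h with
  | ax ht =>
    obtain ⟨t, htA, rfl⟩ := ht
    revert htA
    induction t using Sym2.ind with
    | _ a b =>
      intro htA
      have ha : a.IsNNF := hA _ htA a (by simp)
      have hb : b.IsNNF := hA _ htA b (by simp)
      simp only [Sym2.map_pair_eq, encA]
      rw [nnf_eq_self a ha, nnf_eq_self b hb]
      exact OLRight.ax htA
  | hyp φ =>
    simp only [Sym2.map_pair_eq, encA]
    exact olr_inv_self A₀ φ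
  | cut Γ Δ φ h1 h2 ih1 ih2 =>
    simp only [Sym2.map_pair_eq] at *
    refine OLRight.cut _ φ.nnf _ ih1 ?_
    rw [getInverse, nnf_not_nnf]
    exact ih2
  | replace Γ Δ h ih =>
    simp only [Sym2.map_pair_eq] at *
    exact OLRight.replace _ _ (encA_isNNF Δ) ih
  | andL₁ φ ψ Δ h ih =>
    simp only [Sym2.map_pair_eq, encA, Formula.nnf] at *
    exact olr_swap (OLRight.orR₁ _ _ _ (olr_swap ih))
  | andL₂ φ ψ Δ h ih =>
    simp only [Sym2.map_pair_eq, encA, Formula.nnf] at *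
    exact olr_swap (OLRight.orR₂ _ _ _ (olr_swap ih))
  | andR Γ φ ψ h1 h2 ih1 ih2 =>
    simp only [Sym2.map_pair_eq, encA, Formula.nnf] at *
    exact OLRight.andR _ _ _ ih1 ih2
  | orL φ ψ Δ h1 h2 ih1 ih2 =>
    simp only [Sym2.map_pair_eq, encA, Formula.nnf] at *
    exact olr_swap (OLRight.andR _ _ _ (olr_swap ih1) (olr_swap ih2))
  | orR₁ Γ φ ψ h ih =>
    simp only [Sym2.map_pair_eq, encA, Formula.nnf] at *
    exact OLRight.orR₁ _ _ _ ih
  | orR₂ Γ φ ψ h ih =>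
    simp only [Sym2.map_pair_eq, encA, Formula.nnf] at *
    exact OLRight.orR₂ _ _ _ ih
  | negL Γ φ h ih =>
    simp only [Sym2.map_pair_eq, encA, Formula.nnf] at *
    exact ih
  | negR φ Δ h ih =>
    simp only [Sym2.map_pair_eq, encA] at *
    exact ih
  | botL Δ =>
    simp only [Sym2.map_pair_eq, encA, Formula.nnf]
    exact olr_swap (OLRight.topR _)
  | topR Γ =>
    simp only [Sym2.map_pair_eq, encA, Formula.nnf]
    exact OLRight.topR _

end Trans
/-- Equivalence of the right-only NNF proof system with the full
orthologic proof system, for NNF goals and right-only NNF axioms. -/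
theorem right_only_system_equiv {X : Type} [Countable X] [Infinite X]
    (A : Set (Sym2 (Formula X))) (hA : ∀ t ∈ A, ∀ γ ∈ t, Formula.IsNNF γ)
    (φ ψ : Formula X) (hφ : φ.IsNNF) (hψ : ψ.IsNNF) :
    OLProof (Sym2.map Ann.R '' A) s(Ann.R φ, Ann.R ψ) ↔ OLRight A s(φ, ψ) := by
  constructor
  · intro h
    have h' := full_to_right hA h
    simpa only [Sym2.map_pair_eq, encA, nnf_eq_self φ hφ, nnf_eq_self ψ hψ] using h'
  · intro h
    have h' := right_to_full h
    simpa only [Sym2.map_pair_eq] using h'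
end
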